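/- arXiv:1012.1539 — 9 statements merged into one kernel-verified Lean document; each statement's English description precedes it below -/
import Mathlib

section
/- Let Δ = (E[f(x,z)·x])² / (E_s · E[f(x,z)²]) and assume E[f(x,z)²] > 0 and 0 < Δ < 1. Then the supremum, over all a ∈ ℝ and θ < 0, of J(a,θ) = θ·E[(f(x,z) − a·x)²] − θ·E[f(x,z)²]/(1 − 2θa²E_s) + (1/2)·log(1 − 2θa²E_s) equals −(1/2)·log(1 − Δ), i.e. equals (1/2)·log(1 + Δ/(1 − Δ)). (This is the generalized mutual information of the distorted channel w = f(x,z) with Gaussian codebook ensemble and nearest-neighbor decoding, Proposition 1.) -/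
open MeasureTheory ProbabilityTheory Real Filter Asymptotics
open scoped NNReal ENNReal

lemma integrable_sq_exp {b : ℝ} (hb : 0 < b) :
    Integrable (fun x : ℝ => x ^ 2 * Real.exp (-b * x ^ 2)) := by
  have h := integrable_rpow_mul_exp_neg_mul_sq hb (s := 2) (by norm_num)
  simpa [Real.rpow_natCast] using h

lemma integral_sq_exp {b : ℝ} (hb : 0 < b) :
    ∫ x : ℝ, x ^ 2 * Real.exp (-b * x ^ 2) = Real.sqrt (π / b) / (2 * b) := by
  have hderiv : ∀ x : ℝ, HasDerivAt (fun x : ℝ => x * Real.exp (-b * x ^ 2))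
      (Real.exp (-b * x ^ 2) - 2 * b * (x ^ 2 * Real.exp (-b * x ^ 2))) x := by
    intro x
    have h1 : HasDerivAt (fun x : ℝ => -b * x ^ 2) (-b * (2 * x)) x := by
      simpa using ((hasDerivAt_pow 2 x).const_mul (-b))
    have h2 := (hasDerivAt_id x).mul h1.exp
    exact h2.congr_deriv (by simp only [id]; ring)
  have hint : Integrable (fun x : ℝ =>
      Real.exp (-b * x ^ 2) - 2 * b * (x ^ 2 * Real.exp (-b * x ^ 2))) :=
    (integrable_exp_neg_mul_sq hb).sub ((integrable_sq_exp hb).const_mul _)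
  have htop : Tendsto (fun x : ℝ => x * Real.exp (-b * x ^ 2)) atTop (nhds 0) := by
    have h := rpow_mul_exp_neg_mul_sq_isLittleO_exp_neg hb 1
    simp only [Real.rpow_one] at h
    have hh : Tendsto (fun x : ℝ => (1/2 : ℝ) * x) atTop atTop :=
      tendsto_id.const_mul_atTop (by norm_num)
    have hE : Tendsto (fun x : ℝ => rexp (-(1/2) * x)) atTop (nhds 0) := by
      refine (Real.tendsto_exp_neg_atTop_nhds_zero.comp hh).congr fun x => ?_
      simp [Function.comp, neg_mul]
    exact h.isBigO.trans_tendsto hE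
  have hbot : Tendsto (fun x : ℝ => x * Real.exp (-b * x ^ 2)) atBot (nhds 0) := by
    have h := (htop.comp tendsto_neg_atBot_atTop).neg
    rw [neg_zero] at h
    refine h.congr fun x => ?_
    simp only [Function.comp]
    rw [neg_sq]
    ring
  have h0 := integral_of_hasDerivAt_of_tendsto hderiv hint hbot htop
  rw [sub_zero] at h0
  have h1 := integral_sub (integrable_exp_neg_mul_sq hb) ((integrable_sq_exp hb).const_mul (2*b))
  rw [h1, integral_const_mul _ _, integral_gaussian] at h0
  have hb' : (2 : ℝ) * b ≠ 0 := by positivity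
  field_simp at h0 ⊢
  linarith

lemma integrable_sq_gaussianReal (v : ℝ≥0) (hv : v ≠ 0) :
    Integrable (fun x : ℝ => x ^ 2) (gaussianReal 0 v) := by
  have hv' : (0:ℝ) < v := by exact_mod_cast zero_lt_iff.mpr hv
  have hb : (0:ℝ) < (2*(v:ℝ))⁻¹ := inv_pos.mpr (by linarith)
  rw [gaussianReal_of_var_ne_zero _ hv,
    integrable_withDensity_iff (measurable_gaussianPDF 0 v)
      (ae_of_all _ fun x => ENNReal.ofReal_lt_top)]
  refine (((integrable_sq_exp hb).const_mul ((Real.sqrt (2*π*v))⁻¹)).congr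
    (ae_of_all _ fun x => ?_))
  dsimp only
  rw [gaussianPDF_def, ENNReal.toReal_ofReal (gaussianPDFReal_nonneg _ _ _), gaussianPDFReal]
  rw [sub_zero, show -x^2/(2*(v:ℝ)) = -((2*(v:ℝ))⁻¹)*x^2 by rw [div_eq_mul_inv]; ring]
  ring

lemma integral_sq_gaussianReal (v : ℝ≥0) (hv : v ≠ 0) :
    ∫ x, x ^ 2 ∂(gaussianReal 0 v) = v := by
  have hv' : (0:ℝ) < v := by exact_mod_cast zero_lt_iff.mpr hv
  have hb : (0:ℝ) < (2*(v:ℝ))⁻¹ := inv_pos.mpr (by linarith)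
  rw [gaussianReal_of_var_ne_zero _ hv]
  rw [show gaussianPDF 0 v = fun x => ((Real.toNNReal (gaussianPDFReal 0 v x) : ℝ≥0) : ℝ≥0∞)
    from rfl]
  rw [integral_withDensity_eq_integral_smul
    (by exact (measurable_gaussianPDFReal 0 v).real_toNNReal) _]
  have heq : ∀ x : ℝ, (Real.toNNReal (gaussianPDFReal 0 v x)) • x ^ 2
      = (Real.sqrt (2*π*v))⁻¹ * (x^2 * Real.exp (-((2*(v:ℝ))⁻¹) * x^2)) := by
    intro x
    rw [NNReal.smul_def, Real.coe_toNNReal _ (gaussianPDFReal_nonneg _ _ _), smul_eq_mul, gaussianPDFReal]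
    rw [sub_zero, show -x^2/(2*(v:ℝ)) = -((2*(v:ℝ))⁻¹)*x^2 by rw [div_eq_mul_inv]; ring]
    ring
  simp only [heq]
  rw [integral_const_mul, integral_sq_exp hb]
  rw [show π/((2*(v:ℝ))⁻¹) = 2*π*v by field_simp]
  have hE : Real.sqrt (2*π*v) ≠ 0 := by positivity
  field_simp
theorem stmt_0 (Es σ2 : NNReal) (hEs : 0 < Es) (hσ2 : 0 < σ2)
    (μ : Measure (ℝ × ℝ)) (hμ : μ = (gaussianReal 0 Es).prod (gaussianReal 0 σ2))
    (f : ℝ × ℝ → ℝ) (hf : Measurable f)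
    (hf2 : Integrable (fun p => (f p) ^ 2) μ)
    (hxf : Integrable (fun p => f p * p.1) μ)
    (hP : 0 < ∫ p, (f p) ^ 2 ∂μ)
    (Δ : ℝ)
    (hΔdef : Δ = (∫ p, f p * p.1 ∂μ) ^ 2 / ((Es : ℝ) * ∫ p, (f p) ^ 2 ∂μ))
    (hΔ0 : 0 < Δ) (hΔ1 : Δ < 1) :
    IsLUB {y : ℝ | ∃ a θ : ℝ, θ < 0 ∧
        y = θ * ∫ p, (f p - a * p.1) ^ 2 ∂μ
          - θ * (∫ p, (f p) ^ 2 ∂μ) / (1 - 2 * θ * a ^ 2 * (Es : ℝ))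
          + (1 / 2) * Real.log (1 - 2 * θ * a ^ 2 * (Es : ℝ))}
      (-(1 / 2) * Real.log (1 - Δ)) := by
  have hEs' : (0:ℝ) < Es := by exact_mod_cast hEs
  have hmap : Measure.map Prod.fst μ = gaussianReal 0 Es := by
    rw [hμ]; exact Measure.fst_prod
  have hg2 : Integrable (fun x : ℝ => x ^ 2) (gaussianReal 0 Es) :=
    integrable_sq_gaussianReal Es hEs.ne'
  have hx2int : Integrable (fun p : ℝ × ℝ => p.1 ^ 2) μ := by
    have h := (integrable_map_measure (f := Prod.fst) (g := fun x : ℝ => x ^ 2)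
      (by rw [hmap]; exact hg2.aestronglyMeasurable) measurable_fst.aemeasurable)
    exact h.mp (by rw [hmap]; exact hg2)
  have hx2 : ∫ p, p.1 ^ 2 ∂μ = (Es : ℝ) := by
    have h := integral_map (φ := Prod.fst) (f := fun x : ℝ => x ^ 2)
      measurable_fst.aemeasurable (by rw [hmap]; exact hg2.aestronglyMeasurable)
    rw [hmap] at h
    rw [← h, integral_sq_gaussianReal Es hEs.ne']
  set P := ∫ p, (f p) ^ 2 ∂μ with hPdef
  set R := ∫ p, f p * p.1 ∂μ with hRdef
  have hR2 : R ^ 2 = Δ * Es * P := by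
    rw [hΔdef]; field_simp
  have hint : ∀ a : ℝ, ∫ p, (f p - a * p.1) ^ 2 ∂μ = P - 2 * a * R + a ^ 2 * Es := by
    intro a
    have h1 : (fun p : ℝ × ℝ => (f p - a * p.1) ^ 2)
        = fun p => ((f p) ^ 2 - 2 * a * (f p * p.1)) + a ^ 2 * p.1 ^ 2 := by
      funext p; ring
    have i0 : Integrable (fun p : ℝ × ℝ => 2 * a * (f p * p.1)) μ := hxf.const_mul _
    have i1 : Integrable (fun p : ℝ × ℝ => (f p) ^ 2 - 2 * a * (f p * p.1)) μ := hf2.sub i0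
    have i2 : Integrable (fun p : ℝ × ℝ => a ^ 2 * p.1 ^ 2) μ := hx2int.const_mul _
    rw [h1, integral_add i1 i2, integral_sub hf2 i0, integral_const_mul, integral_const_mul,
      hx2, ← hPdef, ← hRdef]
  have h1Δ : (0:ℝ) < 1 - Δ := by linarith
  constructor
  · rintro y ⟨a, θ, hθ, rfl⟩
    rw [hint a]
    set u := 1 - 2 * θ * a ^ 2 * (Es : ℝ) with hu
    have haux : (0:ℝ) ≤ -θ * (a ^ 2 * Es) :=
      mul_nonneg (by linarith) (mul_nonneg (sq_nonneg a) hEs'.le)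
    have hu1 : 1 ≤ u := by rw [hu]; nlinarith [haux]
    have hu0 : (0:ℝ) < u := by linarith
    have keyeq : (Es:ℝ) * P * (u - (1-Δ) * u^2 - (2*θ*(P - 2*a*R + a^2*Es)*u - 2*θ*P))
        = (R*u + 2*θ*a*(Es:ℝ)*P)^2 - u^2*(R^2 - Δ*(Es:ℝ)*P) := by
      rw [hu]; ring
    have key : 2*θ*(P - 2*a*R + a^2*(Es:ℝ))*u - 2*θ*P ≤ u - (1-Δ)*u^2 := by
      nlinarith [sq_nonneg (R*u + 2*θ*a*(Es:ℝ)*P), mul_pos hEs' hP, keyeq, hR2]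
    have hstep1 : θ*(P - 2*a*R + a^2*(Es:ℝ)) - θ*P/u ≤ (1 - (1-Δ)*u)/2 := by
      have h3 : (2*θ*(P - 2*a*R + a^2*(Es:ℝ))*u - 2*θ*P)/(2*u)
          ≤ (u - (1-Δ)*u^2)/(2*u) := by
        apply div_le_div_of_nonneg_right key
        linarith
      calc θ*(P - 2*a*R + a^2*(Es:ℝ)) - θ*P/u
          = (2*θ*(P - 2*a*R + a^2*(Es:ℝ))*u - 2*θ*P)/(2*u) := by field_simp
        _ ≤ (u - (1-Δ)*u^2)/(2*u) := h3
        _ = (1 - (1-Δ)*u)/2 := by field_simp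
    have hlog : Real.log (1-Δ) + Real.log u ≤ (1-Δ)*u - 1 := by
      have h := Real.log_le_sub_one_of_pos (mul_pos h1Δ hu0)
      rwa [Real.log_mul (ne_of_gt h1Δ) (ne_of_gt hu0)] at h
    nlinarith [hstep1, hlog]
  · intro b hb
    have h2P : (0:ℝ) < 2*P*(1-Δ) := mul_pos (by linarith) h1Δ
    refine hb ⟨R/(Es:ℝ), -(1/(2*P*(1-Δ))), neg_lt_zero.mpr (one_div_pos.mpr h2P), ?_⟩
    rw [hint _]
    have hu : 1 - 2 * (-(1/(2*P*(1-Δ)))) * (R/(Es:ℝ)) ^ 2 * (Es:ℝ) = 1/(1-Δ) := by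
      field_simp
      linear_combination hR2
    have hM : P - 2 * (R/(Es:ℝ)) * R + (R/(Es:ℝ))^2 * (Es:ℝ) = P*(1-Δ) := by
      field_simp
      linear_combination -hR2
    rw [hu, hM, show Real.log (1/(1-Δ)) = -Real.log (1-Δ) by rw [one_div, Real.log_inv]]
    field_simp
    ring
end

section
/- E[x·sgn(x+z)] = E_s·√(2/(π·(E_s + σ²))), i.e. ∫ x·sgn(x+z) dμ(x,z) = E_s·√(2/(π(E_s+σ²))). -/
open MeasureTheory ProbabilityTheory Real Filter Topology Set

/-! Auxiliary lemmas -/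

lemma measurable_real_sign : Measurable Real.sign := by
  unfold Real.sign
  refine Measurable.ite (measurableSet_lt measurable_id measurable_const) measurable_const ?_
  exact Measurable.ite (measurableSet_lt measurable_const measurable_id) measurable_const
    measurable_const

lemma abs_real_sign_le (y : ℝ) : |Real.sign y| ≤ 1 := by
  rcases lt_trichotomy y 0 with h | h | h
  · rw [Real.sign_of_neg h]; norm_num
  · rw [h, Real.sign_zero]; norm_num
  · rw [Real.sign_of_pos h]; norm_num

lemma hasDerivAt_aux {b : ℝ} (hb : b ≠ 0) (x : ℝ) :
    HasDerivAt (fun x : ℝ => -(2 * b)⁻¹ * rexp (-b * x ^ 2)) (x * rexp (-b * x ^ 2)) x := by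
  have h1 : HasDerivAt (fun x : ℝ => -b * x ^ 2) (-b * (2 * x)) x := by
    simpa [mul_comm] using ((hasDerivAt_pow 2 x).const_mul (-b))
  have h2 := (h1.exp).const_mul (-(2 * b)⁻¹)
  refine h2.congr_deriv ?_
  field_simp

lemma tendsto_exp_neg_sq_atTop {b : ℝ} (hb : 0 < b) :
    Tendsto (fun x : ℝ => -(2 * b)⁻¹ * rexp (-b * x ^ 2)) atTop (𝓝 0) := by
  have h1 : Tendsto (fun x : ℝ => -b * x ^ 2) atTop atBot := by
    apply (Filter.tendsto_const_mul_atBot_of_neg (neg_lt_zero.mpr hb)).mpr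
    exact tendsto_pow_atTop (by norm_num)
  have h2 := (Real.tendsto_exp_atBot.comp h1).const_mul (-(2 * b)⁻¹)
  simpa using h2

lemma tendsto_exp_neg_sq_atBot {b : ℝ} (hb : 0 < b) :
    Tendsto (fun x : ℝ => -(2 * b)⁻¹ * rexp (-b * x ^ 2)) atBot (𝓝 0) := by
  have h1 : Tendsto (fun x : ℝ => -b * x ^ 2) atBot atBot := by
    have hsq : Tendsto (fun x : ℝ => x ^ 2) atBot atTop := by
      have h := (tendsto_pow_atTop (n := 2) two_ne_zero).comp
        (tendsto_neg_atBot_atTop (G := ℝ))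
      have heq : ((fun x : ℝ => x ^ 2) ∘ fun x : ℝ => -x) = fun x : ℝ => x ^ 2 := by
        funext x; simp [Function.comp]
      rwa [heq] at h
    apply (Filter.tendsto_const_mul_atBot_of_neg (neg_lt_zero.mpr hb)).mpr
    exact hsq
  have h2 := (Real.tendsto_exp_atBot.comp h1).const_mul (-(2 * b)⁻¹)
  simpa using h2

lemma integral_Ioi_mul_exp {b : ℝ} (hb : 0 < b) (a : ℝ) :
    ∫ x in Ioi a, x * rexp (-b * x ^ 2) = (2 * b)⁻¹ * rexp (-b * a ^ 2) := by
  have := integral_Ioi_of_hasDerivAt_of_tendsto'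
    (f := fun x : ℝ => -(2 * b)⁻¹ * rexp (-b * x ^ 2))
    (f' := fun x : ℝ => x * rexp (-b * x ^ 2)) (a := a) (m := 0)
    (fun x _ => hasDerivAt_aux hb.ne' x)
    ((integrable_mul_exp_neg_mul_sq hb).integrableOn)
    (tendsto_exp_neg_sq_atTop hb)
  rw [this]; ring

lemma integral_Iic_mul_exp {b : ℝ} (hb : 0 < b) (a : ℝ) :
    ∫ x in Iic a, x * rexp (-b * x ^ 2) = -(2 * b)⁻¹ * rexp (-b * a ^ 2) := by
  have := integral_Iic_of_hasDerivAt_of_tendsto'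
    (f := fun x : ℝ => -(2 * b)⁻¹ * rexp (-b * x ^ 2))
    (f' := fun x : ℝ => x * rexp (-b * x ^ 2)) (a := a) (m := 0)
    (fun x _ => hasDerivAt_aux hb.ne' x)
    ((integrable_mul_exp_neg_mul_sq hb).integrableOn)
    (tendsto_exp_neg_sq_atBot hb)
  rw [this]; ring

lemma gaussianPDFReal_eq (v : NNReal) (x : ℝ) :
    gaussianPDFReal 0 v x = (Real.sqrt (2 * π * v))⁻¹ * rexp (-(2 * (v:ℝ))⁻¹ * x ^ 2) := by
  rw [gaussianPDFReal]
  congr 1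
  rcases eq_or_ne (v : ℝ) 0 with hv | hv
  · simp [hv]
  · rw [sub_zero]
    field_simp

/-- Transfer an integral against `gaussianReal 0 v` to a Lebesgue integral. -/
lemma integral_gaussianReal_eq_integral (v : NNReal) (hv : v ≠ 0) (g : ℝ → ℝ) :
    ∫ x, g x ∂(gaussianReal 0 v) = ∫ x, gaussianPDFReal 0 v x * g x := by
  rw [gaussianReal_of_var_ne_zero _ hv]
  have hm : Measurable fun x => (gaussianPDFReal 0 v x).toNNReal :=
    (measurable_gaussianPDFReal 0 v).real_toNNReal
  have hd : (gaussianPDF 0 v) = fun x => ((gaussianPDFReal 0 v x).toNNReal : ENNReal) := by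
    funext x; rfl
  rw [hd, integral_withDensity_eq_integral_smul hm]
  congr 1
  funext x
  rw [NNReal.smul_def, smul_eq_mul, Real.coe_toNNReal _ (gaussianPDFReal_nonneg 0 v x)]

lemma integrable_gaussianReal_iff (v : NNReal) (hv : v ≠ 0) (g : ℝ → ℝ) :
    Integrable g (gaussianReal 0 v) ↔
      Integrable (fun x => gaussianPDFReal 0 v x * g x) volume := by
  rw [gaussianReal_of_var_ne_zero _ hv]
  have hm : Measurable fun x => (gaussianPDFReal 0 v x).toNNReal :=
    (measurable_gaussianPDFReal 0 v).real_toNNReal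
  have hd : (gaussianPDF 0 v) = fun x => ((gaussianPDFReal 0 v x).toNNReal : ENNReal) := by
    funext x; rfl
  rw [hd, integrable_withDensity_iff_integrable_smul hm]
  constructor <;> intro h <;>
  · refine h.congr (ae_of_all _ fun x => ?_)
    simp only [NNReal.smul_def, smul_eq_mul,
      Real.coe_toNNReal _ (gaussianPDFReal_nonneg 0 v x)]

lemma integrable_pdf_mul_abs_aux (v : NNReal) (hv : 0 < v) (z : ℝ) :
    Integrable (fun x => gaussianPDFReal 0 v x * (x * Real.sign (x + z))) volume := by
  have hb : (0:ℝ) < (2 * (v:ℝ))⁻¹ := by positivity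
  set b : ℝ := (2 * (v:ℝ))⁻¹ with hbdef
  set C : ℝ := (Real.sqrt (2 * π * v))⁻¹ with hC
  have hbound : Integrable (fun x : ℝ => C * |x * rexp (-b * x ^ 2)|) volume :=
    ((integrable_mul_exp_neg_mul_sq hb).abs).const_mul C
  refine hbound.mono' ?_ (ae_of_all _ fun x => ?_)
  · refine (((measurable_gaussianPDFReal 0 v).mul
      (measurable_id.mul (measurable_real_sign.comp (measurable_id.add_const z))))).aestronglyMeasurable
  · rw [gaussianPDFReal_eq, ← hbdef, ← hC]
    have hCe : (0:ℝ) ≤ C * rexp (-b * x ^ 2) := by positivity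
    have h1 : ‖C * rexp (-b * x ^ 2) * (x * Real.sign (x + z))‖
        = (C * rexp (-b * x ^ 2)) * (|x| * |Real.sign (x + z)|) := by
      rw [Real.norm_eq_abs, abs_mul, abs_of_nonneg hCe, abs_mul]
    rw [h1]
    have h2 : (C * rexp (-b * x ^ 2)) * (|x| * |Real.sign (x + z)|)
        ≤ (C * rexp (-b * x ^ 2)) * (|x| * 1) :=
      mul_le_mul_of_nonneg_left
        (mul_le_mul_of_nonneg_left (abs_real_sign_le _) (abs_nonneg _)) hCe
    refine h2.trans (le_of_eq ?_)
    rw [mul_one, abs_mul, abs_of_nonneg (Real.exp_nonneg _)]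
    ring

/-- Inner integral: `∫ x, x * sign (x + z) ∂(gaussianReal 0 v) = 2 v pdf_v(z)`. -/
lemma inner_integral (v : NNReal) (hv : 0 < v) (z : ℝ) :
    ∫ x, x * Real.sign (x + z) ∂(gaussianReal 0 v)
      = 2 * (v:ℝ) * gaussianPDFReal 0 v z := by
  have hv' : (v : ℝ) ≠ 0 := by exact_mod_cast hv.ne'
  have hb : (0:ℝ) < (2 * (v:ℝ))⁻¹ := by positivity
  set b : ℝ := (2 * (v:ℝ))⁻¹ with hbdef
  set C : ℝ := (Real.sqrt (2 * π * v))⁻¹ with hC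
  have hpdf : ∀ x, gaussianPDFReal 0 v x = C * rexp (-b * x ^ 2) := fun x =>
    gaussianPDFReal_eq v x
  rw [integral_gaussianReal_eq_integral v hv.ne' _]
  have hint := integrable_pdf_mul_abs_aux v hv z
  rw [← intervalIntegral.integral_Iic_add_Ioi (b := -z) hint.integrableOn hint.integrableOn]
  have hIic : ∫ x in Iic (-z), gaussianPDFReal 0 v x * (x * Real.sign (x + z))
      = C * ((2*b)⁻¹ * rexp (-b * z ^ 2)) := by
    rw [integral_Iic_eq_integral_Iio]
    have : ∫ x in Iio (-z), gaussianPDFReal 0 v x * (x * Real.sign (x + z))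
        = ∫ x in Iio (-z), (-C) * (x * rexp (-b * x ^ 2)) := by
      refine setIntegral_congr_fun measurableSet_Iio fun x hx => ?_
      have hxz : x + z < 0 := by simpa using add_lt_add_left hx z
      rw [hpdf, Real.sign_of_neg hxz]
      ring
    rw [this, integral_const_mul, ← integral_Iic_eq_integral_Iio, integral_Iic_mul_exp hb]
    rw [neg_pow, show ((-1:ℝ)^2) = 1 by norm_num]
    ring
  have hIoi : ∫ x in Ioi (-z), gaussianPDFReal 0 v x * (x * Real.sign (x + z))
      = C * ((2*b)⁻¹ * rexp (-b * z ^ 2)) := by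
    have : ∫ x in Ioi (-z), gaussianPDFReal 0 v x * (x * Real.sign (x + z))
        = ∫ x in Ioi (-z), C * (x * rexp (-b * x ^ 2)) := by
      refine setIntegral_congr_fun measurableSet_Ioi fun x hx => ?_
      have hxz : 0 < x + z := by
        have : -z < x := hx
        linarith
      rw [hpdf, Real.sign_of_pos hxz]
      ring
    rw [this, integral_const_mul, integral_Ioi_mul_exp hb]
    rw [neg_pow, show ((-1:ℝ)^2) = 1 by norm_num]
    ring
  rw [hIic, hIoi, hpdf]
  have hbinv : (2 * b)⁻¹ = (v : ℝ) := by
    rw [hbdef]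
    field_simp
  rw [hbinv]
  ring

lemma integrable_main (Es σ2 : NNReal) (hEs : 0 < Es) (hσ2 : 0 < σ2) :
    Integrable (fun p : ℝ × ℝ => p.1 * Real.sign (p.1 + p.2))
      ((gaussianReal 0 Es).prod (gaussianReal 0 σ2)) := by
  have hEs' : (Es : ℝ) ≠ 0 := by exact_mod_cast hEs.ne'
  have hb : (0:ℝ) < (2 * (Es:ℝ))⁻¹ := by positivity
  -- `fun x => |x|` is integrable w.r.t. `gaussianReal 0 Es`
  have h1 : Integrable (fun x : ℝ => |x|) (gaussianReal 0 Es) := by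
    rw [integrable_gaussianReal_iff Es hEs.ne']
    have : (fun x => gaussianPDFReal 0 Es x * |x|)
        = fun x => (Real.sqrt (2 * π * Es))⁻¹ * |x * rexp (-(2 * (Es:ℝ))⁻¹ * x ^ 2)| := by
      funext x
      rw [gaussianPDFReal_eq, abs_mul, abs_of_nonneg (Real.exp_nonneg _)]
      ring
    rw [this]
    exact ((integrable_mul_exp_neg_mul_sq hb).abs).const_mul _
  -- lift to the product measure
  have h2 : Integrable (fun p : ℝ × ℝ => |p.1|)
      ((gaussianReal 0 Es).prod (gaussianReal 0 σ2)) := by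
    have hmap : ((gaussianReal 0 Es).prod (gaussianReal 0 σ2)).map Prod.fst
        = gaussianReal 0 Es :=
      Measure.fst_prod (μ := gaussianReal 0 Es) (ν := gaussianReal 0 σ2)
    rw [← hmap] at h1
    have := (integrable_map_measure h1.aestronglyMeasurable measurable_fst.aemeasurable).mp h1
    simpa [Function.comp_def] using this
  refine h2.mono' ?_ (ae_of_all _ fun p => ?_)
  · exact ((measurable_fst.mul
      (measurable_real_sign.comp (measurable_fst.add measurable_snd)))).aestronglyMeasurable
  · rw [Real.norm_eq_abs, abs_mul]
    calc |p.1| * |Real.sign (p.1 + p.2)| ≤ |p.1| * 1 :=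
          mul_le_mul_of_nonneg_left (abs_real_sign_le _) (abs_nonneg _)
    _ = |p.1| := mul_one _

theorem stmt_4 (Es σ2 : NNReal) (hEs : 0 < Es) (hσ2 : 0 < σ2)
    (μ : Measure (ℝ × ℝ)) (hμ : μ = (gaussianReal 0 Es).prod (gaussianReal 0 σ2)) :
    ∫ p : ℝ × ℝ, p.1 * Real.sign (p.1 + p.2) ∂μ
      = (Es : ℝ) * Real.sqrt (2 / (Real.pi * ((Es : ℝ) + (σ2 : ℝ)))) := by
  have hEs' : (Es : ℝ) ≠ 0 := by exact_mod_cast hEs.ne'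
  have hσ2' : (σ2 : ℝ) ≠ 0 := by exact_mod_cast hσ2.ne'
  have hEspos : (0:ℝ) < Es := by exact_mod_cast hEs
  have hσ2pos : (0:ℝ) < σ2 := by exact_mod_cast hσ2
  subst hμ
  rw [MeasureTheory.integral_prod_symm _ (integrable_main Es σ2 hEs hσ2)]
  have hinner : ∀ z : ℝ, (∫ x, x * Real.sign (x + z) ∂(gaussianReal 0 Es))
      = 2 * (Es:ℝ) * gaussianPDFReal 0 Es z := fun z => inner_integral Es hEs z
  simp_rw [hinner]
  rw [integral_gaussianReal_eq_integral σ2 hσ2.ne']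
  set b1 : ℝ := (2 * (Es:ℝ))⁻¹ with hb1
  set b2 : ℝ := (2 * (σ2:ℝ))⁻¹ with hb2
  set C1 : ℝ := (Real.sqrt (2 * π * Es))⁻¹ with hC1
  set C2 : ℝ := (Real.sqrt (2 * π * σ2))⁻¹ with hC2
  have hb1pos : (0:ℝ) < b1 := by rw [hb1]; positivity
  have hb2pos : (0:ℝ) < b2 := by rw [hb2]; positivity
  have hstep : (fun z => gaussianPDFReal 0 σ2 z * (2 * (Es:ℝ) * gaussianPDFReal 0 Es z))
      = fun z => (2 * (Es:ℝ) * C1 * C2) * rexp (-(b1 + b2) * z ^ 2) := by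
    funext z
    rw [gaussianPDFReal_eq, gaussianPDFReal_eq, ← hb1, ← hb2, ← hC1, ← hC2]
    rw [show (-(b1 + b2) * z ^ 2) = (-b2 * z ^ 2) + (-b1 * z ^ 2) by ring, Real.exp_add]
    ring
  rw [hstep, integral_const_mul, integral_gaussian]
  -- now pure algebra with square roots
  have hsum : (0:ℝ) < (Es:ℝ) + σ2 := by positivity
  have hval : π / (b1 + b2) = 2 * π * Es * σ2 / ((Es:ℝ) + σ2) := by
    rw [hb1, hb2]
    field_simp
    ring
  rw [hval, hC1, hC2]
  have h4 : Real.sqrt (1/4) = 1/2 := by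
    rw [show (1:ℝ)/4 = (1/2)^2 by norm_num, Real.sqrt_sq (by norm_num : (0:ℝ) ≤ 1/2)]
  have key : (Real.sqrt (2 * π * (Es:ℝ)))⁻¹ * (Real.sqrt (2 * π * (σ2:ℝ)))⁻¹
      * Real.sqrt (2 * π * (Es:ℝ) * σ2 / ((Es:ℝ) + σ2))
      = (1/2) * Real.sqrt (2 / (π * ((Es:ℝ) + σ2))) := by
    have hπ : (0:ℝ) < π := Real.pi_pos
    rw [← Real.sqrt_inv, ← Real.sqrt_inv,
      ← Real.sqrt_mul (by positivity : (0:ℝ) ≤ (2 * π * (Es:ℝ))⁻¹),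
      ← Real.sqrt_mul (by positivity : (0:ℝ) ≤ (2 * π * (Es:ℝ))⁻¹ * (2 * π * (σ2:ℝ))⁻¹),
      show (2 * π * (Es:ℝ))⁻¹ * (2 * π * (σ2:ℝ))⁻¹ * (2 * π * (Es:ℝ) * σ2 / ((Es:ℝ) + σ2))
          = (1/4) * (2 / (π * ((Es:ℝ) + σ2))) from by field_simp; ring,
      Real.sqrt_mul (by norm_num : (0:ℝ) ≤ (1:ℝ)/4), h4]
  linear_combination (2 * (Es:ℝ)) * key
end

section
/- For the binary symmetric output quantizer f(x,z) = sgn(x+z), the quantity Δ = (E[x·sgn(x+z)])² / (E_s · E[sgn(x+z)²]) equals 2·E_s/(π·(E_s + σ²)); consequently the effective SNR Δ/(1 − Δ) equals 2·E_s/((π − 2)·E_s + π·σ²). -/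
open MeasureTheory ProbabilityTheory Real Filter Set
open scoped Topology

namespace Stmt5Aux


lemma measurable_realSign : Measurable Real.sign := by
  have h : Real.sign = fun r : ℝ => if r < 0 then (-1 : ℝ) else if 0 < r then 1 else 0 := by
    funext r; rfl
  rw [h]
  exact Measurable.ite measurableSet_Iio measurable_const
    (Measurable.ite measurableSet_Ioi measurable_const measurable_const)

lemma abs_sign_le (r : ℝ) : |Real.sign r| ≤ 1 := by
  rcases Real.sign_apply_eq r with h | h | h <;> rw [h] <;> norm_num

lemma gauss_integral_eq (m : ℝ) {v : NNReal} (hv : v ≠ 0) (g : ℝ → ℝ) :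
    ∫ x, g x ∂(gaussianReal m v) = ∫ x, gaussianPDFReal m v x * g x := by
  rw [gaussianReal_of_var_ne_zero m hv]
  have h : gaussianPDF m v = fun x => ((gaussianPDFReal m v x).toNNReal : ENNReal) := rfl
  rw [h, integral_withDensity_eq_integral_smul
    ((measurable_gaussianPDFReal m v).real_toNNReal) g]
  refine integral_congr_ae (ae_of_all _ fun x => ?_)
  simp [NNReal.smul_def, Real.coe_toNNReal _ (gaussianPDFReal_nonneg m v x)]

lemma gauss_integrable_iff (m : ℝ) {v : NNReal} (hv : v ≠ 0) (g : ℝ → ℝ) :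
    Integrable g (gaussianReal m v) ↔
      Integrable (fun x => gaussianPDFReal m v x * g x) volume := by
  rw [gaussianReal_of_var_ne_zero m hv]
  have h : gaussianPDF m v = fun x => ((gaussianPDFReal m v x).toNNReal : ENNReal) := rfl
  rw [h, integrable_withDensity_iff_integrable_smul
    ((measurable_gaussianPDFReal m v).real_toNNReal)]
  apply integrable_congr
  refine ae_of_all _ fun x => ?_
  simp [NNReal.smul_def, Real.coe_toNNReal _ (gaussianPDFReal_nonneg m v x)]

lemma pdf_eq (v : NNReal) (x : ℝ) :
    gaussianPDFReal 0 v x = (√(2*π*(v:ℝ)))⁻¹ * rexp (-(2*(v:ℝ))⁻¹ * x^2) := by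
  rw [gaussianPDFReal]
  simp only [sub_zero]
  congr 1
  ring

lemma pdf_neg (v : NNReal) (x : ℝ) :
    gaussianPDFReal 0 v (-x) = gaussianPDFReal 0 v x := by
  simp [gaussianPDFReal, neg_sq]

lemma vpos {v : NNReal} (hv : v ≠ 0) : (0:ℝ) < v := by
  exact_mod_cast zero_lt_iff.mpr hv

lemma integrable_id_mul_pdf {v : NNReal} (hv : v ≠ 0) :
    Integrable (fun x => x * gaussianPDFReal 0 v x) volume := by
  have hv' := vpos hv
  have hb : (0:ℝ) < (2*(v:ℝ))⁻¹ := by positivity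
  have h := (integrable_mul_exp_neg_mul_sq hb).const_mul ((√(2*π*(v:ℝ)))⁻¹)
  exact h.congr (ae_of_all _ fun x => by simp only [pdf_eq]; ring)

lemma hasDerivAt_F {v : NNReal} (hv : v ≠ 0) (x : ℝ) :
    HasDerivAt (fun y => -(v:ℝ) * gaussianPDFReal 0 v y)
      (x * gaussianPDFReal 0 v x) x := by
  have hv' := vpos hv
  have h1 : HasDerivAt (fun y : ℝ => -(2*(v:ℝ))⁻¹ * y^2)
      (-(2*(v:ℝ))⁻¹ * (2 * x ^ 1)) x := by
    simpa using (hasDerivAt_pow 2 x).const_mul (-(2*(v:ℝ))⁻¹)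
  have h4 := ((h1.exp).const_mul ((√(2*π*(v:ℝ)))⁻¹)).const_mul (-(v:ℝ))
  have hfun : (fun y => -(v:ℝ) * gaussianPDFReal 0 v y)
      = fun y => -(v:ℝ) * ((√(2*π*(v:ℝ)))⁻¹ * rexp (-(2*(v:ℝ))⁻¹ * y^2)) := by
    funext y; rw [pdf_eq]
  rw [hfun]
  refine h4.congr_deriv ?_
  rw [pdf_eq]
  field_simp

lemma tendsto_F {v : NNReal} (hv : v ≠ 0) {l : Filter ℝ}
    (hl : Tendsto (fun y : ℝ => y^2) l atTop) :
    Tendsto (fun y => -(v:ℝ) * gaussianPDFReal 0 v y) l (𝓝 0) := by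
  have hv' := vpos hv
  have h0 : Tendsto (fun y : ℝ => (2*(v:ℝ))⁻¹ * y^2) l atTop :=
    hl.const_mul_atTop (by positivity)
  have h1 : Tendsto (fun y : ℝ => -(2*(v:ℝ))⁻¹ * y^2) l atBot := by
    refine (tendsto_neg_atTop_atBot.comp h0).congr fun y => ?_
    exact (neg_mul _ _).symm
  have h2 := Real.tendsto_exp_atBot.comp h1
  have h4 := (h2.const_mul ((√(2*π*(v:ℝ)))⁻¹)).const_mul (-(v:ℝ))
  have h5 : Tendsto (fun y => -(v:ℝ) * ((√(2*π*(v:ℝ)))⁻¹ *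
      Real.exp (-(2*(v:ℝ))⁻¹ * y^2))) l (𝓝 0) := by
    simpa using h4
  exact h5.congr fun y => by rw [pdf_eq v y]

lemma sq_tendsto_atBot : Tendsto (fun y : ℝ => y^2) atBot atTop := by
  have h := (tendsto_pow_atTop (α := ℝ) (by norm_num : (2:ℕ) ≠ 0)).comp tendsto_abs_atBot_atTop
  exact h.congr fun y => sq_abs y

lemma integral_Ioi_part {v : NNReal} (hv : v ≠ 0) (a : ℝ) :
    ∫ x in Ioi a, x * gaussianPDFReal 0 v x = (v:ℝ) * gaussianPDFReal 0 v a := by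
  have h : ∫ x in Ioi a, x * gaussianPDFReal 0 v x
      = 0 - (-(v:ℝ) * gaussianPDFReal 0 v a) :=
    integral_Ioi_of_hasDerivAt_of_tendsto'
      (fun x _ => hasDerivAt_F hv x)
      ((integrable_id_mul_pdf hv).integrableOn)
      (tendsto_F hv (tendsto_pow_atTop (by norm_num : (2:ℕ) ≠ 0)))
  rw [h]; ring

lemma integral_Iio_part {v : NNReal} (hv : v ≠ 0) (a : ℝ) :
    ∫ x in Iio a, x * gaussianPDFReal 0 v x = -(v:ℝ) * gaussianPDFReal 0 v a := by
  rw [← integral_Iic_eq_integral_Iio]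
  have h : ∫ x in Iic a, x * gaussianPDFReal 0 v x
      = (-(v:ℝ) * gaussianPDFReal 0 v a) - 0 :=
    integral_Iic_of_hasDerivAt_of_tendsto
      ((hasDerivAt_F hv a).continuousAt.continuousWithinAt)
      (fun x _ => hasDerivAt_F hv x)
      ((integrable_id_mul_pdf hv).integrableOn)
      (tendsto_F hv sq_tendsto_atBot)
  rw [h]; ring


lemma inner_integral {v : NNReal} (hv : v ≠ 0) (z : ℝ) :
    ∫ x, x * Real.sign (x + z) ∂(gaussianReal 0 v)
      = 2 * (v:ℝ) * gaussianPDFReal 0 v (-z) := by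
  rw [gauss_integral_eq 0 hv]
  have hint := integrable_id_mul_pdf hv
  have hrw : ∀ x : ℝ, gaussianPDFReal 0 v x * (x * Real.sign (x + z))
      = (Ioi (-z)).indicator (fun x => x * gaussianPDFReal 0 v x) x
        - (Iio (-z)).indicator (fun x => x * gaussianPDFReal 0 v x) x := by
    intro x
    rcases lt_trichotomy x (-z) with h | h | h
    · rw [indicator_of_notMem (by simpa using not_lt.mpr h.le),
        indicator_of_mem (mem_Iio.mpr h),
        Real.sign_of_neg (by linarith : x + z < 0)]
      ring
    · rw [indicator_of_notMem (by simp [h]), indicator_of_notMem (by simp [h]),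
        show x + z = 0 by linarith, Real.sign_zero]
      ring
    · rw [indicator_of_mem (mem_Ioi.mpr h),
        indicator_of_notMem (by simpa using not_lt.mpr h.le),
        Real.sign_of_pos (by linarith : 0 < x + z)]
      ring
  calc ∫ x, gaussianPDFReal 0 v x * (x * Real.sign (x + z))
      = ∫ x, ((Ioi (-z)).indicator (fun x => x * gaussianPDFReal 0 v x) x
        - (Iio (-z)).indicator (fun x => x * gaussianPDFReal 0 v x) x) :=
        integral_congr_ae (ae_of_all _ hrw)
    _ = 2 * (v:ℝ) * gaussianPDFReal 0 v (-z) := by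
        rw [integral_sub (hint.indicator measurableSet_Ioi)
            (hint.indicator measurableSet_Iio),
          integral_indicator measurableSet_Ioi, integral_indicator measurableSet_Iio,
          integral_Ioi_part hv, integral_Iio_part hv]
        ring


end Stmt5Aux


open Stmt5Aux

theorem stmt_5 (Es σ2 : NNReal) (hEs : 0 < Es) (hσ2 : 0 < σ2)
    (μ : Measure (ℝ × ℝ)) (hμ : μ = (gaussianReal 0 Es).prod (gaussianReal 0 σ2))
    (Δ : ℝ)
    (hΔdef : Δ = (∫ p : ℝ × ℝ, p.1 * Real.sign (p.1 + p.2) ∂μ) ^ 2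
        / ((Es : ℝ) * ∫ p : ℝ × ℝ, (Real.sign (p.1 + p.2)) ^ 2 ∂μ)) :
    Δ = 2 * (Es : ℝ) / (Real.pi * ((Es : ℝ) + (σ2 : ℝ))) ∧
    Δ / (1 - Δ) = 2 * (Es : ℝ) / ((Real.pi - 2) * (Es : ℝ) + Real.pi * (σ2 : ℝ)) := by
  subst hμ
  have hEs' : Es ≠ 0 := hEs.ne'
  have hσ2' : σ2 ≠ 0 := hσ2.ne'
  have hs : (0:ℝ) < Es := vpos hEs'
  have ht : (0:ℝ) < σ2 := vpos hσ2'
  -- the sign-squared integral equals 1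
  have hnull : ((gaussianReal 0 Es).prod (gaussianReal 0 σ2)) {p : ℝ×ℝ | p.1 + p.2 = 0} = 0 := by
    have hS : MeasurableSet {p : ℝ×ℝ | p.1 + p.2 = 0} :=
      (measurable_fst.add measurable_snd) (measurableSet_singleton 0)
    rw [Measure.prod_apply hS]
    have hsl : ∀ x : ℝ, (gaussianReal 0 σ2) (Prod.mk x ⁻¹' {p : ℝ×ℝ | p.1 + p.2 = 0}) = 0 := by
      intro x
      have hpre : Prod.mk x ⁻¹' {p : ℝ×ℝ | p.1 + p.2 = 0} = {-x} := by
        ext y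
        simp only [mem_preimage, mem_setOf_eq, mem_singleton_iff]
        constructor <;> intro h <;> linarith
      rw [hpre]
      exact gaussianReal_absolutelyContinuous 0 hσ2' (measure_singleton (-x))
    have heq : (fun x : ℝ => (gaussianReal 0 σ2) (Prod.mk x ⁻¹' {p : ℝ×ℝ | p.1 + p.2 = 0}))
        = fun _ => 0 := funext hsl
    rw [heq, lintegral_zero]
  have hsign2 : ∫ p : ℝ×ℝ, (Real.sign (p.1+p.2))^2
      ∂((gaussianReal 0 Es).prod (gaussianReal 0 σ2)) = 1 := by
    have hae : ∀ᵐ p : ℝ×ℝ ∂((gaussianReal 0 Es).prod (gaussianReal 0 σ2)),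
        (Real.sign (p.1+p.2))^2 = 1 := by
      rw [ae_iff]
      refine measure_mono_null ?_ hnull
      intro p hp
      simp only [mem_setOf_eq] at hp ⊢
      by_contra h0
      rcases Real.sign_apply_eq_of_ne_zero _ h0 with h | h <;> simp [h] at hp
    rw [integral_congr_ae hae, integral_const]
    simp
  -- integrability of p.1 * sign(p.1+p.2) for Fubini
  have hxint : Integrable (fun x : ℝ => x) (gaussianReal 0 Es) := by
    rw [gauss_integrable_iff 0 hEs']
    exact (integrable_id_mul_pdf hEs').congr
      (ae_of_all _ fun x => mul_comm x (gaussianPDFReal 0 Es x))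
  have hmap : ((gaussianReal 0 Es).prod (gaussianReal 0 σ2)).map Prod.fst
      = gaussianReal 0 Es := by
    rw [Measure.map_fst_prod]; simp
  have habs : Integrable (fun p : ℝ×ℝ => |p.1|)
      ((gaussianReal 0 Es).prod (gaussianReal 0 σ2)) := by
    have h1 : Integrable (fun x : ℝ => |x|) (gaussianReal 0 Es) := hxint.abs
    rw [← hmap] at h1
    exact (integrable_map_measure h1.aestronglyMeasurable
      measurable_fst.aemeasurable).mp h1
  have hfmeas : AEStronglyMeasurable (fun p : ℝ×ℝ => p.1 * Real.sign (p.1+p.2))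
      ((gaussianReal 0 Es).prod (gaussianReal 0 σ2)) :=
    (measurable_fst.mul (measurable_realSign.comp
      (measurable_fst.add measurable_snd))).aestronglyMeasurable
  have hfint : Integrable (fun p : ℝ×ℝ => p.1 * Real.sign (p.1+p.2))
      ((gaussianReal 0 Es).prod (gaussianReal 0 σ2)) := by
    refine habs.mono' hfmeas (ae_of_all _ fun p => ?_)
    rw [Real.norm_eq_abs, abs_mul]
    calc |p.1| * |Real.sign (p.1+p.2)| ≤ |p.1| * 1 :=
          mul_le_mul_of_nonneg_left (abs_sign_le _) (abs_nonneg _)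
      _ = |p.1| := mul_one _
  -- the first moment
  have hbpos : (0:ℝ) < (2*(σ2:ℝ))⁻¹ + (2*(Es:ℝ))⁻¹ := by positivity
  have hK : (∫ p : ℝ×ℝ, p.1 * Real.sign (p.1+p.2)
        ∂((gaussianReal 0 Es).prod (gaussianReal 0 σ2)))
      = (2*(Es:ℝ)*(√(2*π*(Es:ℝ)))⁻¹*(√(2*π*(σ2:ℝ)))⁻¹)
          * √(π/((2*(σ2:ℝ))⁻¹ + (2*(Es:ℝ))⁻¹)) := by
    calc (∫ p : ℝ×ℝ, p.1 * Real.sign (p.1+p.2)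
        ∂((gaussianReal 0 Es).prod (gaussianReal 0 σ2)))
        = ∫ y, ∫ x, x * Real.sign (x + y) ∂(gaussianReal 0 Es) ∂(gaussianReal 0 σ2) :=
          integral_prod_symm _ hfint
      _ = ∫ y, 2*(Es:ℝ)*gaussianPDFReal 0 Es (-y) ∂(gaussianReal 0 σ2) :=
          integral_congr_ae (ae_of_all _ fun y => inner_integral hEs' y)
      _ = ∫ y, gaussianPDFReal 0 σ2 y * (2*(Es:ℝ)*gaussianPDFReal 0 Es (-y)) :=
          gauss_integral_eq 0 hσ2' _
      _ = ∫ y, (2*(Es:ℝ)*(√(2*π*(Es:ℝ)))⁻¹*(√(2*π*(σ2:ℝ)))⁻¹)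
            * rexp (-((2*(σ2:ℝ))⁻¹ + (2*(Es:ℝ))⁻¹) * y^2) := by
          refine integral_congr_ae (ae_of_all _ fun y => ?_)
          simp only [pdf_neg, pdf_eq]
          rw [show -((2*(σ2:ℝ))⁻¹ + (2*(Es:ℝ))⁻¹) * y^2
              = (-(2*(σ2:ℝ))⁻¹*y^2) + (-(2*(Es:ℝ))⁻¹*y^2) from by ring,
            Real.exp_add]
          ring
      _ = (2*(Es:ℝ)*(√(2*π*(Es:ℝ)))⁻¹*(√(2*π*(σ2:ℝ)))⁻¹)
            * √(π/((2*(σ2:ℝ))⁻¹ + (2*(Es:ℝ))⁻¹)) := by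
          rw [integral_const_mul, integral_gaussian]
  -- compute Δ
  have hΔ : Δ = 2 * (Es : ℝ) / (π * ((Es : ℝ) + (σ2 : ℝ))) := by
    rw [hΔdef, hsign2, hK, mul_one]
    have e1 : ((2*(Es:ℝ)*(√(2*π*(Es:ℝ)))⁻¹*(√(2*π*(σ2:ℝ)))⁻¹)
          * √(π/((2*(σ2:ℝ))⁻¹ + (2*(Es:ℝ))⁻¹)))^2
        = (2*(Es:ℝ))^2 * (2*π*(Es:ℝ))⁻¹ * (2*π*(σ2:ℝ))⁻¹
            * (π/((2*(σ2:ℝ))⁻¹ + (2*(Es:ℝ))⁻¹)) := by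
      rw [show ((2*(Es:ℝ)*(√(2*π*(Es:ℝ)))⁻¹*(√(2*π*(σ2:ℝ)))⁻¹)
              * √(π/((2*(σ2:ℝ))⁻¹ + (2*(Es:ℝ))⁻¹)))^2
          = (2*(Es:ℝ))^2 * ((√(2*π*(Es:ℝ)))⁻¹)^2 * ((√(2*π*(σ2:ℝ)))⁻¹)^2
              * (√(π/((2*(σ2:ℝ))⁻¹ + (2*(Es:ℝ))⁻¹)))^2 from by ring,
        inv_pow, inv_pow, sq_sqrt (by positivity : (0:ℝ) ≤ 2*π*(Es:ℝ)),
        sq_sqrt (by positivity : (0:ℝ) ≤ 2*π*(σ2:ℝ)),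
        sq_sqrt (le_of_lt (div_pos pi_pos hbpos))]
    rw [e1]
    have hπ : π ≠ 0 := pi_ne_zero
    field_simp
  refine ⟨hΔ, ?_⟩
  rw [hΔ]
  have hd1 : π * ((Es:ℝ) + (σ2:ℝ)) ≠ 0 := by positivity
  have hd2 : (0:ℝ) < (π - 2) * (Es:ℝ) + π * (σ2:ℝ) :=
    add_pos (mul_pos (by linarith [pi_gt_three]) hs) (mul_pos pi_pos ht)
  have h3 : 1 - 2 * (Es:ℝ) / (π * ((Es:ℝ) + (σ2:ℝ)))
      = ((π - 2) * (Es:ℝ) + π * (σ2:ℝ)) / (π * ((Es:ℝ) + (σ2:ℝ))) := by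
    field_simp
    ring
  rw [h3]
  field_simp
end

section
/- For the 2M-level symmetric quantizer f, the correlation between the quantized output and the input satisfies E[f(x+z)·x] = E_s·√(2/(π(E_s+σ²)))·( Σ_{i=1}^{M−1} r_i·(exp(−α_{i−1}²/(2(E_s+σ²))) − exp(−α_i²/(2(E_s+σ²)))) + r_M·exp(−α_{M−1}²/(2(E_s+σ²))) ). -/
open MeasureTheory ProbabilityTheory Real

namespace Stmt9
open Set Filter
open scoped NNReal ENNReal


lemma measurable_realSign : Measurable Real.sign := by
  have : Real.sign = fun r : ℝ => if r < 0 then (-1:ℝ) else if 0 < r then 1 else 0 := by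
    funext r; rfl
  rw [this]
  exact Measurable.ite (measurableSet_lt measurable_id measurable_const) measurable_const
    (Measurable.ite (measurableSet_lt measurable_const measurable_id) measurable_const
      measurable_const)

lemma abs_realSign (r : ℝ) : |Real.sign r| ≤ 1 := by
  rcases Real.sign_apply_eq r with h | h | h <;> rw [h] <;> norm_num

lemma mul_realSign (r : ℝ) : r * Real.sign r = |r| := by
  rcases lt_trichotomy r 0 with h | h | h
  · rw [Real.sign_of_neg h, abs_of_neg h]; ring
  · simp [h]
  · rw [Real.sign_of_pos h, abs_of_pos h]; ring

lemma gaussianPDFReal_eq (m : ℝ) (v : ℝ≥0) (x : ℝ) :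
    gaussianPDFReal m v x = (Real.sqrt (2 * π * v))⁻¹ * Real.exp (-(2*(v:ℝ))⁻¹ * (x - m)^2) := by
  rw [gaussianPDFReal]
  congr 1
  rw [neg_div, div_eq_inv_mul, neg_mul]

lemma integrable_mul_gaussianPDFReal (m : ℝ) (v : ℝ≥0) (hv : 0 < v) :
    Integrable (fun x => x * gaussianPDFReal m v x) := by
  have hvr : (0:ℝ) < (2*(v:ℝ))⁻¹ := by positivity
  have h0 : Integrable (fun t : ℝ => t * gaussianPDFReal 0 v t) := by
    have := (integrable_mul_exp_neg_mul_sq hvr).const_mul ((Real.sqrt (2 * π * v))⁻¹)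
    refine this.congr (ae_of_all _ fun t => ?_)
    simp only [gaussianPDFReal_eq, sub_zero]; ring
  have h1 : Integrable (fun x : ℝ => (x - m) * gaussianPDFReal m v x) := by
    have := h0.comp_sub_right m
    refine this.congr (ae_of_all _ fun x => ?_)
    simp only [gaussianPDFReal_sub, zero_add]
  have h2 : Integrable (fun x : ℝ => m * gaussianPDFReal m v x) :=
    (integrable_gaussianPDFReal m v).const_mul m
  refine (h1.add h2).congr (ae_of_all _ fun x => ?_)
  simp only [Pi.add_apply]; ring

lemma integral_mul_gaussianPDFReal (m : ℝ) (v : ℝ≥0) (hv : 0 < v) :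
    ∫ x, x * gaussianPDFReal m v x = m := by
  have hvr : (0:ℝ) < (2*(v:ℝ))⁻¹ := by positivity
  have h0 : Integrable (fun t : ℝ => t * gaussianPDFReal 0 v t) := by
    have := (integrable_mul_exp_neg_mul_sq hvr).const_mul ((Real.sqrt (2 * π * v))⁻¹)
    refine this.congr (ae_of_all _ fun t => ?_)
    simp only [gaussianPDFReal_eq, sub_zero]; ring
  have hodd : ∫ t : ℝ, t * gaussianPDFReal 0 v t = 0 := by
    have h1 : ∫ t : ℝ, (-t) * gaussianPDFReal 0 v (-t) = ∫ t : ℝ, t * gaussianPDFReal 0 v t := by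
      simpa using integral_neg_eq_self (fun t : ℝ => t * gaussianPDFReal 0 v t) volume
    have h2 : ∀ t : ℝ, (-t) * gaussianPDFReal 0 v (-t) = -(t * gaussianPDFReal 0 v t) := by
      intro t
      have : gaussianPDFReal 0 v (-t) = gaussianPDFReal 0 v t := by
        simp [gaussianPDFReal]
      rw [this]; ring
    simp_rw [h2, integral_neg] at h1
    linarith
  have key : ∀ x : ℝ, x * gaussianPDFReal m v x
      = (x - m) * gaussianPDFReal 0 v (x - m) + m * gaussianPDFReal m v x := by
    intro x
    rw [gaussianPDFReal_sub (μ := 0) x m, zero_add]; ring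
  simp_rw [key]
  rw [integral_add (by
      have := h0.comp_sub_right m
      exact this) ((integrable_gaussianPDFReal m v).const_mul m)]
  rw [integral_sub_right_eq_self (fun t => t * gaussianPDFReal 0 v t) m, hodd,
    integral_const_mul, integral_gaussianPDFReal_eq_one m hv.ne', zero_add, mul_one]

lemma gaussianReal_eq_withDensity (m : ℝ) (v : ℝ≥0) (hv : 0 < v) :
    gaussianReal m v = volume.withDensity (fun x => ((gaussianPDFReal m v x).toNNReal : ℝ≥0∞)) := by
  rw [gaussianReal_of_var_ne_zero m hv.ne']
  rfl

lemma integral_gaussianReal_eq (m : ℝ) (v : ℝ≥0) (hv : 0 < v) (g : ℝ → ℝ) :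
    ∫ x, g x ∂(gaussianReal m v) = ∫ x, gaussianPDFReal m v x * g x := by
  rw [gaussianReal_eq_withDensity m v hv,
    integral_withDensity_eq_integral_smul
      ((measurable_gaussianPDFReal m v).real_toNNReal) g]
  congr 1
  funext x
  rw [NNReal.smul_def, Real.coe_toNNReal _ (gaussianPDFReal_nonneg m v x), smul_eq_mul]




lemma factor_real {e s : ℝ} (he : 0 < e) (hs : 0 < s) (x u : ℝ) :
    ((Real.sqrt (2*π*e))⁻¹ * rexp (-(x-0)^2/(2*e))) *
      ((Real.sqrt (2*π*s))⁻¹ * rexp (-(u-x)^2/(2*s)))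
    = ((Real.sqrt (2*π*(e+s)))⁻¹ * rexp (-(u-0)^2/(2*(e+s)))) *
      ((Real.sqrt (2*π*(e*s/(e+s))))⁻¹ *
        rexp (-(x-(e/(e+s))*u)^2/(2*(e*s/(e+s))))) := by
  have hes : 0 < e + s := by linarith
  rw [mul_mul_mul_comm, mul_mul_mul_comm (Real.sqrt (2*π*(e+s)))⁻¹]
  congr 1
  · rw [← mul_inv, ← mul_inv, ← Real.sqrt_mul (by positivity), ← Real.sqrt_mul (by positivity)]
    congr 1
    field_simp
  · rw [← Real.exp_add, ← Real.exp_add, Real.exp_eq_exp]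
    field_simp
    ring

lemma hasDerivAt_aux (c : ℝ) (hc : 0 < c) (u : ℝ) :
    HasDerivAt (fun w : ℝ => -c * rexp (-w^2/(2*c))) (u * rexp (-u^2/(2*c))) u := by
  have h1 : HasDerivAt (fun w : ℝ => -w^2/(2*c)) (-(2*u^1)/(2*c)) u :=
    ((hasDerivAt_pow 2 u).neg).div_const (2*c)
  have h2 := (h1.exp).const_mul (-c)
  refine h2.congr_deriv ?_
  field_simp

lemma cont_aux (c : ℝ) : Continuous (fun w : ℝ => w * rexp (-w^2/(2*c))) := by
  fun_prop

lemma integral_id_mul_exp (c : ℝ) (hc : 0 < c) (a b : ℝ) :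
    ∫ u in a..b, u * rexp (-u^2/(2*c)) = c * (rexp (-a^2/(2*c)) - rexp (-b^2/(2*c))) := by
  rw [intervalIntegral.integral_eq_sub_of_hasDerivAt
    (fun u _ => hasDerivAt_aux c hc u) ((cont_aux c).intervalIntegrable a b)]
  ring

lemma integrable_id_mul_exp (c : ℝ) (hc : 0 < c) :
    Integrable (fun u : ℝ => u * rexp (-u^2/(2*c))) := by
  have := integrable_mul_exp_neg_mul_sq (b := (2*c)⁻¹) (by positivity)
  refine this.congr (ae_of_all _ fun u => ?_)
  simp only [neg_mul, neg_div, div_eq_inv_mul]; ring_nf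

lemma integral_id_mul_exp_Ioi (c : ℝ) (hc : 0 < c) (a : ℝ) :
    ∫ u in Ioi a, u * rexp (-u^2/(2*c)) = c * rexp (-a^2/(2*c)) := by
  have htend : Tendsto (fun w : ℝ => -c * rexp (-w^2/(2*c))) atTop (nhds 0) := by
    have h1 : Tendsto (fun w : ℝ => -w^2/(2*c)) atTop atBot := by
      have h2 : Tendsto (fun w : ℝ => w^2) atTop atTop := tendsto_pow_atTop (by norm_num)
      have h3 := Tendsto.atTop_div_const (by positivity : (0:ℝ) < 2*c) h2
      have h4 := tendsto_neg_atTop_atBot.comp h3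
      simpa [Function.comp_def, neg_div] using h4
    have := (Real.tendsto_exp_atBot.comp h1).const_mul (-c)
    simpa using this
  have := integral_Ioi_of_hasDerivAt_of_tendsto (a := a) (f := fun w : ℝ => -c * rexp (-w^2/(2*c)))
    ((continuous_const.mul ((((continuous_pow 2).neg).div_const (2*c)).rexp)).continuousWithinAt)
    (fun u _ => hasDerivAt_aux c hc u)
    ((integrable_id_mul_exp c hc).integrableOn) htend
  rw [this]
  ring


lemma integrable_abs_mul_exp (c : ℝ) (hc : 0 < c) :
    Integrable (fun u : ℝ => |u| * rexp (-u^2/(2*c))) := by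
  refine (integrable_id_mul_exp c hc).abs.congr (ae_of_all _ fun u => ?_)
  simp only [abs_mul, Real.abs_exp]

lemma abs_integrand_eq_pos (c : ℝ) {u : ℝ} (hu : 0 < u) :
    |u| * rexp (-u^2/(2*c)) = u * rexp (-u^2/(2*c)) := by
  rw [abs_of_pos hu]

lemma sector_mid (c : ℝ) (hc : 0 < c) {a b : ℝ} (ha : 0 ≤ a) (hab : a ≤ b) :
    ∫ u in {u : ℝ | a ≤ |u| ∧ |u| < b}, |u| * rexp (-u^2/(2*c))
      = 2*c*(rexp (-a^2/(2*c)) - rexp (-b^2/(2*c))) := by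
  have hset : {u : ℝ | a ≤ |u| ∧ |u| < b} =ᵐ[volume] (Ioo a b ∪ Ioo (-b) (-a) : Set ℝ) := by
    rw [Filter.eventuallyEq_set]
    have hnull : volume ({a, -a} : Set ℝ) = 0 := (Set.toFinite _).measure_zero _
    filter_upwards [measure_eq_zero_iff_ae_notMem.mp hnull] with u hu
    simp only [Set.mem_insert_iff, Set.mem_singleton_iff, not_or] at hu
    constructor
    · rintro ⟨h1, h2⟩
      rcases lt_trichotomy u 0 with h | h | h
      · right
        rw [abs_of_neg h] at h1 h2
        refine ⟨by linarith, ?_⟩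
        rcases lt_or_eq_of_le h1 with h' | h'
        · linarith
        · exact absurd (by linarith : u = -a) hu.2
      · exfalso
        rw [h, abs_zero] at h1
        exact hu.1 (h.trans (le_antisymm h1 ha).symm)
      · left
        rw [abs_of_pos h] at h1 h2
        constructor
        · rcases lt_or_eq_of_le h1 with h' | h'
          · exact h'
          · exact absurd h'.symm hu.1
        · exact h2
    · rintro (⟨h1, h2⟩ | ⟨h1, h2⟩)
      · have hu0 : 0 < u := lt_of_le_of_lt ha h1
        rw [abs_of_pos hu0]; exact ⟨le_of_lt h1, h2⟩
      · have hu0 : u < 0 := lt_of_lt_of_le h2 (by linarith)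
        rw [abs_of_neg hu0]; constructor <;> linarith
  rw [setIntegral_congr_set hset]
  have hdisj : Disjoint (Ioo a b) (Ioo (-b) (-a) : Set ℝ) := by
    rw [Set.disjoint_left]
    rintro u ⟨h1, _⟩ ⟨_, h4⟩
    linarith
  rw [setIntegral_union hdisj measurableSet_Ioo
    ((integrable_abs_mul_exp c hc).integrableOn) ((integrable_abs_mul_exp c hc).integrableOn)]
  have e1 : ∫ u in Ioo a b, |u| * rexp (-u^2/(2*c))
      = c * (rexp (-a^2/(2*c)) - rexp (-b^2/(2*c))) := by
    rw [setIntegral_congr_fun measurableSet_Ioo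
      (fun u hu => abs_integrand_eq_pos c (lt_of_le_of_lt ha hu.1)),
      ← integral_Ioc_eq_integral_Ioo, ← intervalIntegral.integral_of_le hab]
    exact integral_id_mul_exp c hc a b
  have e2 : ∫ u in Ioo (-b) (-a), |u| * rexp (-u^2/(2*c))
      = c * (rexp (-a^2/(2*c)) - rexp (-b^2/(2*c))) := by
    rw [← integral_Ioc_eq_integral_Ioo, ← intervalIntegral.integral_of_le (by linarith : -b ≤ -a),
      ← intervalIntegral.integral_comp_neg (fun u => |u| * rexp (-u^2/(2*c)))]
    have : ∀ x : ℝ, |(-x)| * rexp (-(-x)^2/(2*c)) = |x| * rexp (-x^2/(2*c)) := by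
      intro x; rw [abs_neg, neg_sq]
    simp_rw [this]
    rw [show (∫ x in a..b, |x| * rexp (-x^2/(2*c)))
        = ∫ x in a..b, x * rexp (-x^2/(2*c)) from ?_]
    · exact integral_id_mul_exp c hc a b
    · rw [intervalIntegral.integral_of_le hab, intervalIntegral.integral_of_le hab]
      refine setIntegral_congr_fun measurableSet_Ioc (fun u hu => ?_)
      exact abs_integrand_eq_pos c (lt_of_le_of_lt ha hu.1)
  rw [e1, e2]; ring

lemma sector_top (c : ℝ) (hc : 0 < c) {a : ℝ} (ha : 0 ≤ a) :
    ∫ u in {u : ℝ | a ≤ |u|}, |u| * rexp (-u^2/(2*c)) = 2*c*rexp (-a^2/(2*c)) := by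
  have hset : {u : ℝ | a ≤ |u|} =ᵐ[volume] (Ioi a ∪ Iio (-a) : Set ℝ) := by
    rw [Filter.eventuallyEq_set]
    have hnull : volume ({a, -a} : Set ℝ) = 0 := (Set.toFinite _).measure_zero _
    filter_upwards [measure_eq_zero_iff_ae_notMem.mp hnull] with u hu
    simp only [Set.mem_insert_iff, Set.mem_singleton_iff, not_or] at hu
    constructor
    · intro h1
      rcases lt_trichotomy u 0 with h | h | h
      · right
        rw [abs_of_neg h] at h1
        simp only [Set.mem_Iio]
        rcases lt_or_eq_of_le h1 with h' | h'
        · linarith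
        · exact absurd (by linarith : u = -a) hu.2
      · exfalso
        rw [h, abs_zero] at h1
        exact hu.1 (h.trans (le_antisymm h1 ha).symm)
      · left
        rw [abs_of_pos h] at h1
        simp only [Set.mem_Ioi]
        rcases lt_or_eq_of_le h1 with h' | h'
        · exact h'
        · exact absurd h'.symm hu.1
    · rintro (h1 | h1)
      · simp only [Set.mem_Ioi] at h1
        have hu0 : 0 < u := lt_of_le_of_lt ha h1
        rw [abs_of_pos hu0]; linarith
      · simp only [Set.mem_Iio] at h1
        have hu0 : u < 0 := lt_of_lt_of_le h1 (by linarith)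
        rw [abs_of_neg hu0]; linarith
  rw [setIntegral_congr_set hset]
  have hdisj : Disjoint (Ioi a) (Iio (-a) : Set ℝ) := by
    rw [Set.disjoint_left]
    intro u h1 h2
    simp only [Set.mem_Ioi] at h1
    simp only [Set.mem_Iio] at h2
    linarith
  rw [setIntegral_union hdisj measurableSet_Iio
    ((integrable_abs_mul_exp c hc).integrableOn) ((integrable_abs_mul_exp c hc).integrableOn)]
  have e1 : ∫ u in Ioi a, |u| * rexp (-u^2/(2*c)) = c * rexp (-a^2/(2*c)) := by
    rw [setIntegral_congr_fun measurableSet_Ioi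
      (fun u hu => abs_integrand_eq_pos c (lt_of_le_of_lt ha hu))]
    exact integral_id_mul_exp_Ioi c hc a
  have e2 : ∫ u in Iio (-a), |u| * rexp (-u^2/(2*c)) = c * rexp (-a^2/(2*c)) := by
    rw [setIntegral_congr_set (Iio_ae_eq_Iic (a := -a)),
      ← integral_comp_neg_Ioi a (fun u => |u| * rexp (-u^2/(2*c)))]
    have : ∀ x : ℝ, |(-x)| * rexp (-(-x)^2/(2*c)) = |x| * rexp (-x^2/(2*c)) := by
      intro x; rw [abs_neg, neg_sq]
    simp_rw [this]
    rw [setIntegral_congr_fun measurableSet_Ioi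
      (fun u hu => abs_integrand_eq_pos c (lt_of_le_of_lt ha hu))]
    exact integral_id_mul_exp_Ioi c hc a
  rw [e1, e2]; ring


lemma measurable_realSign2 : Measurable Real.sign := measurable_realSign

lemma measSet_mid (a b : ℝ) : MeasurableSet {w : ℝ | a ≤ |w| ∧ |w| < b} := by
  rw [Set.setOf_and]
  exact (measurableSet_le measurable_const measurable_abs).inter
    (measurableSet_lt measurable_abs measurable_const)

lemma measSet_top (a : ℝ) : MeasurableSet {w : ℝ | a ≤ |w|} :=
  measurableSet_le measurable_const measurable_abs

lemma ind_mul (S : Set ℝ) (rr : ℝ) (u : ℝ) :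
    u * (S.indicator (fun _ => rr) u * Real.sign u)
      = rr * S.indicator (fun w => |w|) u := by
  by_cases h : u ∈ S
  · rw [Set.indicator_of_mem h, Set.indicator_of_mem h, ← mul_realSign u]; ring
  · rw [Set.indicator_of_notMem h, Set.indicator_of_notMem h]; ring

lemma integrable_id_gaussianReal (m : ℝ) (v : ℝ≥0) (hv : 0 < v) :
    Integrable (fun x : ℝ => x) (gaussianReal m v) := by
  rw [gaussianReal_eq_withDensity m v hv,
    integrable_withDensity_iff_integrable_coe_smul
      ((measurable_gaussianPDFReal m v).real_toNNReal)]
  refine (integrable_mul_gaussianPDFReal m v hv).congr (ae_of_all _ fun x => ?_)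
  simp only [NNReal.smul_def, Real.coe_toNNReal _ (gaussianPDFReal_nonneg m v x), smul_eq_mul]
  ring

lemma gauss_sector_mid (v : ℝ≥0) (hv : 0 < v) {a b : ℝ} (ha : 0 ≤ a) (hab : a ≤ b) :
    ∫ u, Set.indicator {w : ℝ | a ≤ |w| ∧ |w| < b} (fun w => |w|) u ∂(gaussianReal 0 v)
      = (Real.sqrt (2*π*v))⁻¹ *
        (2*(v:ℝ)*(rexp (-a^2/(2*(v:ℝ))) - rexp (-b^2/(2*(v:ℝ))))) := by
  rw [integral_gaussianReal_eq 0 v hv]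
  have key : ∀ u : ℝ,
      gaussianPDFReal 0 v u * Set.indicator {w : ℝ | a ≤ |w| ∧ |w| < b} (fun w => |w|) u
      = Set.indicator {w : ℝ | a ≤ |w| ∧ |w| < b}
          (fun w => (Real.sqrt (2*π*v))⁻¹ * (|w| * rexp (-w^2/(2*(v:ℝ))))) u := by
    intro u
    by_cases h : u ∈ {w : ℝ | a ≤ |w| ∧ |w| < b}
    · rw [Set.indicator_of_mem h, Set.indicator_of_mem h]
      simp only [gaussianPDFReal, sub_zero]
      ring
    · rw [Set.indicator_of_notMem h, Set.indicator_of_notMem h, mul_zero]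
  simp_rw [key]
  rw [integral_indicator (measSet_mid a b)]
  have hvr : (0:ℝ) < (v:ℝ) := hv
  rw [MeasureTheory.integral_const_mul, sector_mid (v:ℝ) hvr ha hab]

lemma gauss_sector_top (v : ℝ≥0) (hv : 0 < v) {a : ℝ} (ha : 0 ≤ a) :
    ∫ u, Set.indicator {w : ℝ | a ≤ |w|} (fun w => |w|) u ∂(gaussianReal 0 v)
      = (Real.sqrt (2*π*v))⁻¹ * (2*(v:ℝ)*rexp (-a^2/(2*(v:ℝ)))) := by
  rw [integral_gaussianReal_eq 0 v hv]
  have key : ∀ u : ℝ,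
      gaussianPDFReal 0 v u * Set.indicator {w : ℝ | a ≤ |w|} (fun w => |w|) u
      = Set.indicator {w : ℝ | a ≤ |w|}
          (fun w => (Real.sqrt (2*π*v))⁻¹ * (|w| * rexp (-w^2/(2*(v:ℝ))))) u := by
    intro u
    by_cases h : u ∈ {w : ℝ | a ≤ |w|}
    · rw [Set.indicator_of_mem h, Set.indicator_of_mem h]
      simp only [gaussianPDFReal, sub_zero]
      ring
    · rw [Set.indicator_of_notMem h, Set.indicator_of_notMem h, mul_zero]
  simp_rw [key]
  rw [integral_indicator (measSet_top a)]
  have hvr : (0:ℝ) < (v:ℝ) := hv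
  rw [MeasureTheory.integral_const_mul, sector_top (v:ℝ) hvr ha]

lemma factor_pdf (Es σ2 : ℝ≥0) (hE : 0 < Es) (hS : 0 < σ2) (x u : ℝ) :
    gaussianPDFReal 0 Es x * gaussianPDFReal x σ2 u
      = gaussianPDFReal 0 (Es+σ2) u *
        gaussianPDFReal (((Es:ℝ)/((Es:ℝ)+(σ2:ℝ))) * u) (Es*σ2/(Es+σ2)) x := by
  have hE' : (0:ℝ) < Es := hE
  have hS' : (0:ℝ) < σ2 := hS
  have h := factor_real hE' hS' x u
  simp only [gaussianPDFReal]
  have hco1 : ((Es+σ2 : ℝ≥0) : ℝ) = (Es:ℝ) + (σ2:ℝ) := by push_cast; ring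
  have hco2 : ((Es*σ2/(Es+σ2) : ℝ≥0) : ℝ) = (Es:ℝ)*(σ2:ℝ)/((Es:ℝ)+(σ2:ℝ)) := by
    push_cast; ring
  rw [hco1, hco2]
  exact h
end Stmt9

open Stmt9 in
theorem stmt_9 (Es σ2 : NNReal) (hEs : 0 < Es) (hσ2 : 0 < σ2)
    (μ : Measure (ℝ × ℝ)) (hμ : μ = (gaussianReal 0 Es).prod (gaussianReal 0 σ2))
    (M : ℕ) (hM : 1 ≤ M) (α : ℕ → ℝ) (r : ℕ → ℝ)
    (hα0 : α 0 = 0) (hαmono : ∀ i : ℕ, i + 1 ≤ M - 1 → α i < α (i + 1))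
    (f : ℝ → ℝ)
    (hf_mid : ∀ i : ℕ, 1 ≤ i → i ≤ M - 1 → ∀ y : ℝ,
      α (i - 1) ≤ |y| → |y| < α i → f y = r i * Real.sign y)
    (hf_top : ∀ y : ℝ, α (M - 1) ≤ |y| → f y = r M * Real.sign y) :
    ∫ p : ℝ × ℝ, f (p.1 + p.2) * p.1 ∂μ
      = (Es : ℝ) * Real.sqrt (2 / (Real.pi * ((Es : ℝ) + (σ2 : ℝ)))) *
        ((∑ i ∈ Finset.Icc 1 (M - 1), r i *
            (Real.exp (-(α (i - 1)) ^ 2 / (2 * ((Es : ℝ) + (σ2 : ℝ))))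
              - Real.exp (-(α i) ^ 2 / (2 * ((Es : ℝ) + (σ2 : ℝ))))))
          + r M * Real.exp (-(α (M - 1)) ^ 2 / (2 * ((Es : ℝ) + (σ2 : ℝ))))) := by
  subst hμ
  classical
  have hE : (0:ℝ) < (Es:ℝ) := hEs
  have hSr : (0:ℝ) < (σ2:ℝ) := hσ2
  have hcr : (0:ℝ) < (Es:ℝ) + (σ2:ℝ) := by linarith
  have hs2pos : 0 < Es + σ2 := add_pos hEs hσ2
  have hvpos : 0 < Es * σ2 / (Es + σ2) := div_pos (mul_pos hEs hσ2) hs2pos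
  -- monotonicity
  have hmono : ∀ j : ℕ, j ≤ M - 1 → ∀ i : ℕ, i ≤ j → α i ≤ α j := by
    intro j
    induction j with
    | zero => intro _ i hi; rw [Nat.le_zero.mp hi]
    | succ n ih =>
      intro hj i hi
      rcases Nat.lt_or_ge i (n+1) with h | h
      · exact le_trans (ih (by omega) i (by omega)) (le_of_lt (hαmono n hj))
      · rw [le_antisymm hi h]
  have hα_nonneg : ∀ i : ℕ, i ≤ M - 1 → 0 ≤ α i := by
    intro i hi
    have := hmono i hi 0 (Nat.zero_le _)
    rwa [hα0] at this
  -- the explicit form of f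
  set F : ℝ → ℝ := fun y =>
    (∑ i ∈ Finset.Icc 1 (M-1),
      Set.indicator {w : ℝ | α (i-1) ≤ |w| ∧ |w| < α i} (fun _ => r i) y) * Real.sign y
    + Set.indicator {w : ℝ | α (M-1) ≤ |w|} (fun _ => r M) y * Real.sign y with hFdef
  have hFmeas : Measurable F := by
    refine Measurable.add ?_ ?_
    · exact (Finset.measurable_sum _ (fun i _ =>
        measurable_const.indicator (measSet_mid _ _))).mul measurable_realSign
    · exact (measurable_const.indicator (measSet_top _)).mul measurable_realSign
  set C : ℝ := (∑ i ∈ Finset.Icc 1 (M-1), |r i|) + |r M| with hCdef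
  have hFbd : ∀ y : ℝ, ‖F y‖ ≤ C := by
    intro y
    rw [Real.norm_eq_abs]
    simp only [hFdef]
    have hs := abs_realSign y
    have h1 : |∑ i ∈ Finset.Icc 1 (M-1),
        Set.indicator {w : ℝ | α (i-1) ≤ |w| ∧ |w| < α i} (fun _ => r i) y|
        ≤ ∑ i ∈ Finset.Icc 1 (M-1), |r i| := by
      refine (Finset.abs_sum_le_sum_abs _ _).trans (Finset.sum_le_sum fun j _ => ?_)
      by_cases h : y ∈ {w : ℝ | α (j-1) ≤ |w| ∧ |w| < α j}
      · rw [Set.indicator_of_mem h]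
      · rw [Set.indicator_of_notMem h, abs_zero]; exact abs_nonneg _
    have h2 : |Set.indicator {w : ℝ | α (M-1) ≤ |w|} (fun _ => r M) y| ≤ |r M| := by
      by_cases h : y ∈ {w : ℝ | α (M-1) ≤ |w|}
      · rw [Set.indicator_of_mem h]
      · rw [Set.indicator_of_notMem h, abs_zero]; exact abs_nonneg _
    refine le_trans (abs_add_le _ _) ?_
    rw [abs_mul, abs_mul, hCdef]
    exact add_le_add (le_trans (mul_le_of_le_one_right (abs_nonneg _) hs) h1)
      (le_trans (mul_le_of_le_one_right (abs_nonneg _) hs) h2)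
  have hclass : ∀ y : ℝ, f y = F y := by
    intro y
    simp only [hFdef]
    by_cases htop : α (M-1) ≤ |y|
    · rw [hf_top y htop, Set.indicator_of_mem (show y ∈ {w : ℝ | α (M-1) ≤ |w|} from htop),
        Finset.sum_eq_zero]
      · ring
      · intro j hj
        obtain ⟨hj1, hj2⟩ := Finset.mem_Icc.mp hj
        refine Set.indicator_of_notMem ?_ _
        rintro ⟨h1, h2⟩
        have : α j ≤ α (M-1) := hmono (M-1) le_rfl j hj2
        linarith
    · push_neg at htop
      have hP : ∃ j, |y| < α j := ⟨M-1, htop⟩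
      have hiP : |y| < α (Nat.find hP) := Nat.find_spec hP
      have hile : Nat.find hP ≤ M - 1 := Nat.find_le htop
      have hi1 : 1 ≤ Nat.find hP := by
        by_contra h
        have h0 : Nat.find hP = 0 := by omega
        rw [h0, hα0] at hiP
        exact absurd hiP (not_lt.mpr (abs_nonneg y))
      have hlb : α (Nat.find hP - 1) ≤ |y| :=
        not_lt.mp (Nat.find_min hP (show Nat.find hP - 1 < Nat.find hP by omega))
      rw [hf_mid (Nat.find hP) hi1 hile y hlb hiP,
        Set.indicator_of_notMem (show y ∉ {w : ℝ | α (M-1) ≤ |w|} from not_le.mpr htop),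
        Finset.sum_eq_single (Nat.find hP)]
      · rw [Set.indicator_of_mem
          (show y ∈ {w : ℝ | α (Nat.find hP - 1) ≤ |w| ∧ |w| < α (Nat.find hP)} from ⟨hlb, hiP⟩)]
        ring
      · intro j hj hne
        obtain ⟨hj1, hj2⟩ := Finset.mem_Icc.mp hj
        refine Set.indicator_of_notMem ?_ _
        rintro ⟨h1, h2⟩
        rcases lt_or_gt_of_ne hne with h | h
        · exact absurd h2 (Nat.find_min hP h)
        · have : α (Nat.find hP) ≤ α (j-1) := hmono (j-1) (by omega) (Nat.find hP) (by omega)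
          linarith
      · intro h
        exact absurd (Finset.mem_Icc.mpr ⟨hi1, hile⟩) h
  simp_rw [hclass]
  -- integrability over the product gaussian
  have hslice : ∀ x : ℝ, Integrable (fun z : ℝ => F (x+z) * x) (gaussianReal 0 σ2) := by
    intro x
    refine Integrable.mono' (integrable_const (C * |x|))
      ((hFmeas.comp (measurable_const_add x)).mul_const x).aestronglyMeasurable
      (ae_of_all _ fun z => ?_)
    rw [norm_mul, Real.norm_eq_abs x]
    exact mul_le_mul_of_nonneg_right (hFbd _) (abs_nonneg _)
  have habs_int : ∀ (m : ℝ) (w : NNReal), 0 < w → Integrable (fun x : ℝ => |x|) (gaussianReal m w) :=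
    fun m w hw => (integrable_id_gaussianReal m w hw).abs
  have hmP : AEStronglyMeasurable (fun p : ℝ × ℝ => F (p.1+p.2) * p.1)
      ((gaussianReal 0 Es).prod (gaussianReal 0 σ2)) :=
    ((hFmeas.comp (measurable_fst.add measurable_snd)).mul measurable_fst).aestronglyMeasurable
  have hintP : Integrable (fun p : ℝ × ℝ => F (p.1+p.2) * p.1)
      ((gaussianReal 0 Es).prod (gaussianReal 0 σ2)) := by
    rw [MeasureTheory.integrable_prod_iff hmP]
    refine ⟨ae_of_all _ fun x => hslice x, ?_⟩
    refine Integrable.mono' ((habs_int 0 Es hEs).const_mul C)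
      (hmP.norm.integral_prod_right') (ae_of_all _ fun x => ?_)
    rw [Real.norm_eq_abs, abs_of_nonneg (integral_nonneg fun z => norm_nonneg _)]
    calc ∫ z, ‖F (x+z) * x‖ ∂(gaussianReal 0 σ2)
        ≤ ∫ _, C * |x| ∂(gaussianReal 0 σ2) := by
          refine integral_mono (hslice x).norm (integrable_const _) fun z => ?_
          rw [norm_mul, Real.norm_eq_abs x]
          exact mul_le_mul_of_nonneg_right (hFbd _) (abs_nonneg _)
      _ = C * |x| := by simp
  have step1 : ∫ p : ℝ × ℝ, F (p.1+p.2) * p.1 ∂((gaussianReal 0 Es).prod (gaussianReal 0 σ2))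
      = ∫ x, (∫ u, F u ∂(gaussianReal x σ2)) * x ∂(gaussianReal 0 Es) := by
    rw [MeasureTheory.integral_prod _ hintP]
    refine integral_congr_ae (ae_of_all _ fun x => ?_)
    show ∫ z, F (x + z) * x ∂(gaussianReal 0 σ2) = _
    rw [MeasureTheory.integral_mul_const]
    congr 1
    have hmap : Measure.map (fun z => x + z) (gaussianReal 0 σ2) = gaussianReal x σ2 := by
      rw [gaussianReal_map_const_add x, zero_add]
    rw [← hmap, integral_map (measurable_const_add x).aemeasurable
      hFmeas.aestronglyMeasurable]
  have step2 : ∫ x, (∫ u, F u ∂(gaussianReal x σ2)) * x ∂(gaussianReal 0 Es)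
      = ∫ x : ℝ, ∫ u : ℝ,
          F u * (x * (gaussianPDFReal 0 Es x * gaussianPDFReal x σ2 u)) := by
    rw [integral_gaussianReal_eq 0 Es hEs]
    refine integral_congr_ae (ae_of_all _ fun x => ?_)
    show gaussianPDFReal 0 Es x * ((∫ u, F u ∂(gaussianReal x σ2)) * x)
        = ∫ u : ℝ, F u * (x * (gaussianPDFReal 0 Es x * gaussianPDFReal x σ2 u))
    rw [integral_gaussianReal_eq x σ2 hσ2]
    calc gaussianPDFReal 0 Es x * ((∫ u, gaussianPDFReal x σ2 u * F u) * x)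
        = (gaussianPDFReal 0 Es x * x) * ∫ u, gaussianPDFReal x σ2 u * F u := by ring
      _ = ∫ u, (gaussianPDFReal 0 Es x * x) * (gaussianPDFReal x σ2 u * F u) :=
          (MeasureTheory.integral_const_mul _ _).symm
      _ = ∫ u, F u * (x * (gaussianPDFReal 0 Es x * gaussianPDFReal x σ2 u)) := by
          refine integral_congr_ae (ae_of_all _ fun u => ?_); ring
  have hpdfSm : Measurable (fun q : ℝ × ℝ => gaussianPDFReal q.1 σ2 q.2) := by
    have heq : (fun q : ℝ × ℝ => gaussianPDFReal q.1 σ2 q.2)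
        = fun q : ℝ × ℝ => (Real.sqrt (2*π*σ2))⁻¹ * rexp (-(q.2-q.1)^2/(2*(σ2:ℝ))) := rfl
    rw [heq]
    exact ((((measurable_snd.sub measurable_fst).pow_const 2).neg.div_const _).exp).const_mul _
  have hH : Integrable
      (fun q : ℝ × ℝ => q.1 * (gaussianPDFReal 0 Es q.1 * gaussianPDFReal q.1 σ2 q.2))
      (volume.prod volume) := by
    have hm : AEStronglyMeasurable
        (fun q : ℝ × ℝ => q.1 * (gaussianPDFReal 0 Es q.1 * gaussianPDFReal q.1 σ2 q.2))
        (volume.prod volume) :=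
      (measurable_fst.mul (((measurable_gaussianPDFReal 0 Es).comp measurable_fst).mul
        hpdfSm)).aestronglyMeasurable
    rw [MeasureTheory.integrable_prod_iff hm]
    constructor
    · exact ae_of_all _ fun x => by
        simpa using ((integrable_gaussianPDFReal x σ2).const_mul (gaussianPDFReal 0 Es x)).const_mul x
    · have heq : (fun x : ℝ => ∫ u : ℝ, ‖x * (gaussianPDFReal 0 Es x * gaussianPDFReal x σ2 u)‖)
          = fun x : ℝ => |x| * gaussianPDFReal 0 Es x := by
        funext x
        have hnorm : ∀ u : ℝ, ‖x * (gaussianPDFReal 0 Es x * gaussianPDFReal x σ2 u)‖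
            = (|x| * gaussianPDFReal 0 Es x) * gaussianPDFReal x σ2 u := by
          intro u
          rw [Real.norm_eq_abs, abs_mul, abs_mul,
            abs_of_nonneg (gaussianPDFReal_nonneg _ _ _),
            abs_of_nonneg (gaussianPDFReal_nonneg _ _ _), mul_assoc]
        simp_rw [hnorm]
        rw [MeasureTheory.integral_const_mul, integral_gaussianPDFReal_eq_one x hσ2.ne', mul_one]
      rw [heq]
      refine (integrable_mul_gaussianPDFReal 0 Es hEs).abs.congr (ae_of_all _ fun x => ?_)
      simp only [abs_mul, abs_of_nonneg (gaussianPDFReal_nonneg 0 Es x)]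
  have hintD : Integrable
      (Function.uncurry fun x u : ℝ =>
        F u * (x * (gaussianPDFReal 0 Es x * gaussianPDFReal x σ2 u)))
      (volume.prod volume) :=
    hH.bdd_mul ((hFmeas.comp measurable_snd).aestronglyMeasurable) (c := C) (ae_of_all _ fun q => hFbd q.2)
  have step3 : (∫ x : ℝ, ∫ u : ℝ,
        F u * (x * (gaussianPDFReal 0 Es x * gaussianPDFReal x σ2 u)))
      = ∫ u : ℝ, ∫ x : ℝ,
        F u * (x * (gaussianPDFReal 0 Es x * gaussianPDFReal x σ2 u)) :=
    MeasureTheory.integral_integral_swap hintD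
  have step4 : ∀ u : ℝ, (∫ x : ℝ,
        F u * (x * (gaussianPDFReal 0 Es x * gaussianPDFReal x σ2 u)))
      = ((Es:ℝ)/((Es:ℝ)+(σ2:ℝ))) * (gaussianPDFReal 0 (Es+σ2) u * (u * F u)) := by
    intro u
    have h1 : ∀ x : ℝ, F u * (x * (gaussianPDFReal 0 Es x * gaussianPDFReal x σ2 u))
        = (F u * gaussianPDFReal 0 (Es+σ2) u) *
          (x * gaussianPDFReal (((Es:ℝ)/((Es:ℝ)+(σ2:ℝ))) * u) (Es*σ2/(Es+σ2)) x) := by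
      intro x
      rw [factor_pdf Es σ2 hEs hσ2 x u]
      ring
    simp_rw [h1]
    rw [MeasureTheory.integral_const_mul, integral_mul_gaussianPDFReal _ _ hvpos]
    ring
  have step5 : (∫ u : ℝ,
        ((Es:ℝ)/((Es:ℝ)+(σ2:ℝ))) * (gaussianPDFReal 0 (Es+σ2) u * (u * F u)))
      = ((Es:ℝ)/((Es:ℝ)+(σ2:ℝ))) * ∫ u, u * F u ∂(gaussianReal 0 (Es+σ2)) := by
    rw [MeasureTheory.integral_const_mul, ← integral_gaussianReal_eq 0 (Es+σ2) hs2pos]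
  -- sector decomposition
  have hpoint : ∀ u : ℝ, u * F u
      = (∑ i ∈ Finset.Icc 1 (M-1),
          r i * Set.indicator {w : ℝ | α (i-1) ≤ |w| ∧ |w| < α i} (fun w => |w|) u)
        + r M * Set.indicator {w : ℝ | α (M-1) ≤ |w|} (fun w => |w|) u := by
    intro u
    simp only [hFdef]
    rw [mul_add]
    congr 1
    · rw [Finset.sum_mul, Finset.mul_sum]
      exact Finset.sum_congr rfl fun i _ => ind_mul _ _ u
    · exact ind_mul _ _ u
  have hindint : ∀ a b : ℝ, Integrable
      (Set.indicator {w : ℝ | a ≤ |w| ∧ |w| < b} (fun w => |w|)) (gaussianReal 0 (Es+σ2)) :=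
    fun a b => (habs_int 0 (Es+σ2) hs2pos).indicator (measSet_mid a b)
  have hindtop : ∀ a : ℝ, Integrable
      (Set.indicator {w : ℝ | a ≤ |w|} (fun w => |w|)) (gaussianReal 0 (Es+σ2)) :=
    fun a => (habs_int 0 (Es+σ2) hs2pos).indicator (measSet_top a)
  have step6 : ∫ u, u * F u ∂(gaussianReal 0 (Es+σ2))
      = (∑ i ∈ Finset.Icc 1 (M-1),
          r i * ((Real.sqrt (2*π*(((Es:ℝ))+(σ2:ℝ))))⁻¹ *
            (2*((Es:ℝ)+(σ2:ℝ))*(rexp (-(α (i-1))^2/(2*((Es:ℝ)+(σ2:ℝ))))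
              - rexp (-(α i)^2/(2*((Es:ℝ)+(σ2:ℝ))))))))
        + r M * ((Real.sqrt (2*π*(((Es:ℝ))+(σ2:ℝ))))⁻¹ *
            (2*((Es:ℝ)+(σ2:ℝ))*rexp (-(α (M-1))^2/(2*((Es:ℝ)+(σ2:ℝ)))))) := by
    rw [integral_congr_ae (ae_of_all _ hpoint),
      integral_add (integrable_finset_sum _ fun i _ => (hindint _ _).const_mul _)
        ((hindtop _).const_mul _),
      integral_finset_sum _ fun i _ => (hindint _ _).const_mul _]
    congr 1
    · refine Finset.sum_congr rfl fun i hi => ?_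
      obtain ⟨hi1, hi2⟩ := Finset.mem_Icc.mp hi
      rw [MeasureTheory.integral_const_mul,
        gauss_sector_mid (Es+σ2) hs2pos (hα_nonneg (i-1) (by omega))
          (hmono i hi2 (i-1) (by omega))]
      push_cast
      ring
    · rw [MeasureTheory.integral_const_mul,
        gauss_sector_top (Es+σ2) hs2pos (hα_nonneg (M-1) le_rfl)]
      push_cast
      ring
  rw [step1, step2, step3, integral_congr_ae (ae_of_all _ step4), step5, step6]
  -- final algebra
  have hsqrt_ne : Real.sqrt (2*π*((Es:ℝ)+(σ2:ℝ))) ≠ 0 := by positivity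
  have hsq : Real.sqrt (2 / (π * ((Es:ℝ)+(σ2:ℝ)))) = 2 / Real.sqrt (2*π*((Es:ℝ)+(σ2:ℝ))) := by
    rw [show (2:ℝ) / (π * ((Es:ℝ)+(σ2:ℝ)))
        = (2 / Real.sqrt (2*π*((Es:ℝ)+(σ2:ℝ))))^2 from ?_, Real.sqrt_sq (by positivity)]
    rw [div_pow, Real.sq_sqrt (by positivity)]
    field_simp
  have hcne : ((Es:ℝ) + (σ2:ℝ)) ≠ 0 := ne_of_gt hcr
  have expand : ∀ (q B : ℝ) (g : ℕ → ℝ),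
      q * ((∑ i ∈ Finset.Icc 1 (M-1), g i) + B)
        = (∑ i ∈ Finset.Icc 1 (M-1), q * g i) + q * B := by
    intro q B g
    rw [mul_add, Finset.mul_sum]
  rw [hsq, expand, expand]
  refine congrArg₂ (· + ·) (Finset.sum_congr rfl fun i _ => ?_) ?_ <;>
  · field_simp
end

section
/- Let d ≥ 1, let Ω be a symmetric positive definite real d×d matrix, let b ∈ ℝ^d, let E_s > 0, and assume 0 < bᵀΩ⁻¹b < E_s. Then the supremum, over all β ∈ ℝ^d and θ < 0, of J(β,θ) = θ·(βᵀΩβ − 2·bᵀβ + E_s) − (θ/(1 − 2θE_s))·βᵀΩβ + (1/2)·log(1 − 2θE_s) equals −(1/2)·log(1 − bᵀΩ⁻¹b/E_s), i.e. equals (1/2)·log(1 + Δ/(1 − Δ)) with Δ = bᵀΩ⁻¹b/E_s. (This is the GMI formula for super-Nyquist output sampling, Proposition 2, where Ω is the correlation matrix of the distorted output samples and b is their correlation vector with the input symbol.) -/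
open Real Matrix

theorem stmt_13 (d : ℕ) (hd : 1 ≤ d) (Ω : Matrix (Fin d) (Fin d) ℝ) (hΩ : Ω.PosDef)
    (b : Fin d → ℝ) (Es : ℝ) (hEs : 0 < Es)
    (hB0 : 0 < b ⬝ᵥ (Ω⁻¹ *ᵥ b)) (hBE : b ⬝ᵥ (Ω⁻¹ *ᵥ b) < Es) :
    IsLUB {y : ℝ | ∃ (β : Fin d → ℝ) (θ : ℝ), θ < 0 ∧
        y = θ * (β ⬝ᵥ (Ω *ᵥ β) - 2 * (b ⬝ᵥ β) + Es)
          - (θ / (1 - 2 * θ * Es)) * (β ⬝ᵥ (Ω *ᵥ β))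
          + (1 / 2) * Real.log (1 - 2 * θ * Es)}
      (-(1 / 2) * Real.log (1 - b ⬝ᵥ (Ω⁻¹ *ᵥ b) / Es)) := by
  set x : Fin d → ℝ := Ω⁻¹ *ᵥ b with hxdef
  set B : ℝ := b ⬝ᵥ x with hBdef
  have hdet : IsUnit Ω.det := isUnit_iff_ne_zero.mpr (ne_of_gt hΩ.det_pos)
  have hΩx : Ω *ᵥ x = b := by
    rw [hxdef, Matrix.mulVec_mulVec, Matrix.mul_nonsing_inv Ω hdet, Matrix.one_mulVec]
  have hT : Ωᵀ = Ω := by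
    have := hΩ.isHermitian
    rwa [Matrix.IsHermitian, Matrix.conjTranspose_eq_transpose_of_trivial] at this
  have hsym : ∀ (u v : Fin d → ℝ), u ⬝ᵥ (Ω *ᵥ v) = v ⬝ᵥ (Ω *ᵥ u) := by
    intro u v
    rw [Matrix.dotProduct_mulVec, ← Matrix.mulVec_transpose, hT, dotProduct_comm]
  have hxx : x ⬝ᵥ (Ω *ᵥ x) = B := by
    rw [hΩx, dotProduct_comm]
  have hxβ : ∀ β : Fin d → ℝ, x ⬝ᵥ (Ω *ᵥ β) = b ⬝ᵥ β := by
    intro β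
    rw [hsym x β, hΩx, dotProduct_comm]
  have hQnn : ∀ β : Fin d → ℝ, 0 ≤ β ⬝ᵥ (Ω *ᵥ β) := by
    intro β
    simpa using hΩ.posSemidef.dotProduct_mulVec_nonneg β
  have hEB : 0 < Es - B := by linarith
  have hB : (0:ℝ) < B := hB0
  have hα : 0 < 1 - B / Es := by
    rw [sub_pos, div_lt_one hEs]; exact hBE
  -- the maximizer
  set θ0 : ℝ := -B / (2 * Es * (Es - B)) with hθ0def
  set β0 : Fin d → ℝ := (Es / B) • x with hβ0def
  have hθ0 : θ0 < 0 := div_neg_of_neg_of_pos (by linarith) (by positivity)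
  have hQ0 : β0 ⬝ᵥ (Ω *ᵥ β0) = (Es / B) ^ 2 * B := by
    rw [hβ0def, Matrix.mulVec_smul, smul_dotProduct, dotProduct_smul,
      smul_eq_mul, smul_eq_mul, hxx]
    ring
  have hP0 : b ⬝ᵥ β0 = Es := by
    rw [hβ0def, dotProduct_smul, smul_eq_mul, ← hBdef]
    field_simp
  have hc1 : 1 - 2 * θ0 * Es = (1 - B / Es)⁻¹ := by
    rw [hθ0def]
    field_simp
    ring
  have hmem : -(1 / 2) * Real.log (1 - B / Es)
      = θ0 * (β0 ⬝ᵥ (Ω *ᵥ β0) - 2 * (b ⬝ᵥ β0) + Es)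
        - (θ0 / (1 - 2 * θ0 * Es)) * (β0 ⬝ᵥ (Ω *ᵥ β0))
        + (1 / 2) * Real.log (1 - 2 * θ0 * Es) := by
    rw [hQ0, hP0, hc1, Real.log_inv]
    have hdiv : θ0 / (1 - B / Es)⁻¹ = θ0 * (1 - B / Es) := by
      rw [div_inv_eq_mul]
    rw [hdiv]
    have hz : θ0 * ((Es / B) ^ 2 * B - 2 * Es + Es)
        - θ0 * (1 - B / Es) * ((Es / B) ^ 2 * B) = 0 := by
      rw [hθ0def]
      field_simp
      ring
    linarith [hz]
  constructor
  · rintro y ⟨β, θ, hθ, rfl⟩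
    set Q : ℝ := β ⬝ᵥ (Ω *ᵥ β) with hQdef
    set P : ℝ := b ⬝ᵥ β with hPdef
    have hQ : 0 ≤ Q := hQnn β
    have hc : (1:ℝ) < 1 - 2 * θ * Es := by nlinarith
    have hc0 : (0:ℝ) < 1 - 2 * θ * Es := by linarith
    -- quadratic form nonnegativity
    have h0 : (0:ℝ) ≤ (1 - 2 * θ * Es) ^ 2 * B
        + 2 * (1 - 2 * θ * Es) * (2 * θ * Es) * P + (2 * θ * Es) ^ 2 * Q := by
      have h := hQnn ((1 - 2 * θ * Es) • x + (2 * θ * Es) • β)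
      rw [Matrix.mulVec_add, Matrix.mulVec_smul, Matrix.mulVec_smul,
        add_dotProduct, smul_dotProduct, smul_dotProduct,
        dotProduct_add, dotProduct_add, dotProduct_smul,
        dotProduct_smul, dotProduct_smul, dotProduct_smul,
        hxx, hxβ β, hsym β x, hxβ β] at h
      simp only [smul_eq_mul] at h
      nlinarith [h]
    have hlog : Real.log (1 - 2 * θ * Es)
        ≤ (1 - 2 * θ * Es) * (1 - B / Es) - 1 - Real.log (1 - B / Es) := by
      have h1 : Real.log ((1 - 2 * θ * Es) * (1 - B / Es))
          ≤ (1 - 2 * θ * Es) * (1 - B / Es) - 1 :=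
        Real.log_le_sub_one_of_pos (by positivity)
      rw [Real.log_mul (by positivity) (by positivity)] at h1
      linarith
    have hmain : θ * (Q - 2 * P + Es) - (θ / (1 - 2 * θ * Es)) * Q
        + ((1 - 2 * θ * Es) * (1 - B / Es) - 1) / 2 ≤ 0 := by
      have heq : θ * (Q - 2 * P + Es) - (θ / (1 - 2 * θ * Es)) * Q
          + ((1 - 2 * θ * Es) * (1 - B / Es) - 1) / 2
          = (-((1 - 2 * θ * Es) ^ 2 * B
              + 2 * (1 - 2 * θ * Es) * (2 * θ * Es) * P + (2 * θ * Es) ^ 2 * Q))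
            / (2 * Es * (1 - 2 * θ * Es)) := by
        rw [eq_div_iff (by positivity)]
        field_simp
        linear_combination (-2 * Es * θ * Q) * mul_inv_cancel₀ hc0.ne'
      rw [heq]
      apply div_nonpos_of_nonpos_of_nonneg (by linarith) (by positivity)
    linarith
  · intro u hu
    exact hu ⟨β0, θ0, hθ0, hmem⟩
end

section
/- Let E_s > 0 and 0 < B < E_s. Then the supremum over θ < 0 of g(θ) = θ·E_s + (1/(2E_s) − θ)·B + (1/2)·log(1 − 2θE_s) equals −(1/2)·log(1 − B/E_s), and it is attained at the θ < 0 satisfying 1 − 2θE_s = E_s/(E_s − B). -/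
open Real

theorem stmt_15 (Es B : ℝ) (hEs : 0 < Es) (hB0 : 0 < B) (hBE : B < Es) :
    IsGreatest {y : ℝ | ∃ θ : ℝ, θ < 0 ∧
        y = θ * Es + (1 / (2 * Es) - θ) * B + (1 / 2) * Real.log (1 - 2 * θ * Es)}
      (-(1 / 2) * Real.log (1 - B / Es)) ∧
    ∃ θ : ℝ, θ < 0 ∧ 1 - 2 * θ * Es = Es / (Es - B) ∧
      θ * Es + (1 / (2 * Es) - θ) * B + (1 / 2) * Real.log (1 - 2 * θ * Es)
        = -(1 / 2) * Real.log (1 - B / Es) := by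
  have ha : 0 < Es - B := by linarith
  set θ0 : ℝ := -B / (2 * Es * (Es - B)) with hθ0
  have hθ0neg : θ0 < 0 := div_neg_of_neg_of_pos (by linarith) (by positivity)
  have hu0 : 1 - 2 * θ0 * Es = Es / (Es - B) := by
    rw [hθ0]
    field_simp
    ring
  have hlogM : Real.log (1 - B / Es) = Real.log (Es - B) - Real.log Es := by
    rw [show (1 - B / Es) = (Es - B) / Es by field_simp,
      Real.log_div (by linarith) (by linarith)]
  have hlogu0 : Real.log (1 - 2 * θ0 * Es) = Real.log Es - Real.log (Es - B) := by
    rw [hu0, Real.log_div (by linarith) (by linarith)]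
  have hval : θ0 * Es + (1 / (2 * Es) - θ0) * B + (1 / 2) * Real.log (1 - 2 * θ0 * Es)
      = -(1 / 2) * Real.log (1 - B / Es) := by
    rw [hlogu0, hlogM, hθ0]
    field_simp
    ring
  refine ⟨⟨⟨θ0, hθ0neg, hval.symm⟩, ?_⟩, θ0, hθ0neg, hu0, hval⟩
  rintro y ⟨θ, hθ, rfl⟩
  have hu : 0 < 1 - 2 * θ * Es := by nlinarith
  have hkey : Real.log ((1 - 2 * θ * Es) * (Es - B) / Es)
      ≤ (1 - 2 * θ * Es) * (Es - B) / Es - 1 :=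
    Real.log_le_sub_one_of_pos (by positivity)
  have hlog : Real.log (1 - 2 * θ * Es)
      = Real.log ((1 - 2 * θ * Es) * (Es - B) / Es)
        + (Real.log Es - Real.log (Es - B)) := by
    rw [Real.log_div (by positivity) (by linarith), Real.log_mul (by linarith) (by linarith)]
    ring
  have hzero : θ * Es + (1 / (2 * Es) - θ) * B
      + (1 / 2) * ((1 - 2 * θ * Es) * (Es - B) / Es - 1) = 0 := by
    field_simp
    ring
  rw [hlog, hlogM]
  linarith [hkey]
end

section
/- Let S : ℝ → ℝ be the normalized sinc function, S(x) = sin(πx)/(πx) for x ≠ 0 and S(0) = 1. Then for all a, b ∈ ℝ, the series Σ_{k ∈ ℤ} S(a − k)·S(b − k) converges and Σ_{k ∈ ℤ} S(a − k)·S(b − k) = S(a − b). (In the paper this gives Ξ(l, u) = Σ_{k ∈ ℤ} sinc(l/L − k)·sinc(u/L − k) = sinc((l − u)/L) for the sinc pulse-shaping function.) -/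
open Real MeasureTheory Complex AddCircle

lemma meas_liftIoc (p a : ℝ) [Fact (0 < p)] (f : ℝ → ℂ) (hf : Measurable f) :
    Measurable (AddCircle.liftIoc p a f) :=
  (hf.comp measurable_subtype_coe).comp (AddCircle.measurableEquivIoc p a).measurable

set_option maxHeartbeats 1000000 in
theorem stmt_16 (S : ℝ → ℝ) (hS0 : S 0 = 1)
    (hS : ∀ x : ℝ, x ≠ 0 → S x = Real.sin (Real.pi * x) / (Real.pi * x)) :
    ∀ a b : ℝ,
      Summable (fun k : ℤ => S (a - (k : ℝ)) * S (b - (k : ℝ))) ∧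
      ∑' k : ℤ, S (a - (k : ℝ)) * S (b - (k : ℝ)) = S (a - b) := by
  haveI : Fact (0 < (1:ℝ)) := ⟨one_pos⟩
  have hSeven : ∀ x : ℝ, S (-x) = S x := by
    intro x
    by_cases hx : x = 0
    · simp [hx]
    · rw [hS _ (neg_ne_zero.2 hx), hS _ hx, mul_neg, Real.sin_neg, neg_div_neg_eq]
  -- the key Fourier coefficient computation
  have key : ∀ (c : ℝ) (n : ℤ) (hab : (-(1:ℝ)/2) < -(1:ℝ)/2 + 1),
      fourierCoeffOn hab (fun t : ℝ => Complex.exp (2 * π * Complex.I * c * t)) n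
        = ((S (c - n) : ℝ) : ℂ) := by
    intro c n hab
    rw [fourierCoeffOn_eq_integral]
    have h1 : ∀ x : ℝ,
        (fourier (-n) (x : AddCircle ((-(1:ℝ)/2 + 1) - (-(1:ℝ)/2))))
            • Complex.exp (2 * π * Complex.I * c * x)
          = Complex.exp ((2 * π * Complex.I * ((c : ℂ) - (n : ℂ))) * x) := by
      intro x
      rw [fourier_coe_apply, smul_eq_mul, ← Complex.exp_add]
      congr 1
      push_cast
      have h2 : ((-1:ℂ)/2 + 1 - -1/2) = 1 := by norm_num
      rw [h2]
      ring
    simp_rw [h1]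
    by_cases hd : c - (n : ℝ) = 0
    · have : (c : ℂ) - (n : ℂ) = 0 := by exact_mod_cast hd
      rw [this]
      simp [hd, hS0]
    · have hne : (2 * (π : ℂ) * Complex.I * ((c : ℂ) - (n : ℂ))) ≠ 0 := by
        refine mul_ne_zero (mul_ne_zero (mul_ne_zero two_ne_zero ?_) Complex.I_ne_zero) ?_
        · exact_mod_cast Complex.ofReal_ne_zero.2 Real.pi_ne_zero
        · exact_mod_cast sub_ne_zero.2 fun h => hd (by exact_mod_cast sub_eq_zero.2 h)
      rw [integral_exp_mul_complex hne]
      set d : ℝ := c - n with hdd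
      have hd' : ((c : ℂ) - (n : ℂ)) = (d : ℂ) := by push_cast [hdd]; ring
      rw [hd']
      have e1 : (2 * (π:ℂ) * Complex.I * (d:ℂ)) * ((-(1:ℝ)/2 + 1 : ℝ) : ℂ)
          = ((π * d : ℝ) : ℂ) * Complex.I := by push_cast; ring
      have e2 : (2 * (π:ℂ) * Complex.I * (d:ℂ)) * ((-(1:ℝ)/2 : ℝ) : ℂ)
          = -(((π * d : ℝ) : ℂ)) * Complex.I := by push_cast; ring
      rw [e1, e2]
      have e3 : Complex.exp (((π * d : ℝ) : ℂ) * Complex.I)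
            - Complex.exp (-(((π * d : ℝ) : ℂ)) * Complex.I)
          = 2 * Complex.sin (((π * d : ℝ) : ℂ)) * Complex.I := by
        rw [Complex.sin]
        field_simp
        ring_nf
        simp [Complex.I_sq]
        ring
      rw [e3, hS _ hd]
      rw [← Complex.ofReal_sin]
      have : ((π * d : ℝ) : ℂ) ≠ 0 := by
        exact_mod_cast Complex.ofReal_ne_zero.2 (mul_ne_zero Real.pi_ne_zero hd)
      push_cast
      field_simp
      rw [Complex.real_smul]
      push_cast
      field_simp
      ring
  -- membership in L²
  have hmem : ∀ c : ℝ, MemLp (AddCircle.liftIoc (1:ℝ) (-(1:ℝ)/2)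
      (fun t : ℝ => Complex.exp (2 * π * Complex.I * c * t))) 2 haarAddCircle := by
    intro c
    have hm : Measurable (AddCircle.liftIoc (1:ℝ) (-(1:ℝ)/2)
        (fun t : ℝ => Complex.exp (2 * π * Complex.I * c * t))) :=
      meas_liftIoc 1 (-(1:ℝ)/2) _ (by fun_prop)
    refine MemLp.of_bound hm.aestronglyMeasurable 1 (ae_of_all _ fun z => ?_)
    show ‖Complex.exp (2 * π * Complex.I * c * ((equivIoc 1 (-(1:ℝ)/2) z : ℝ) : ℂ))‖ ≤ 1
    set u : ℝ := (equivIoc 1 (-(1:ℝ)/2) z : ℝ)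
    have : (2 * (π:ℂ) * Complex.I * c * (u : ℂ)) = ((2 * π * c * u : ℝ) : ℂ) * Complex.I := by
      push_cast; ring
    rw [this, Complex.norm_exp_ofReal_mul_I]
  intro a b
  have hma := hmem a
  have hmb := hmem b
  set x : Lp ℂ 2 (@haarAddCircle 1 _) := hma.toLp _ with hxdef
  set y : Lp ℂ 2 (@haarAddCircle 1 _) := hmb.toLp _ with hydef
  have hcoe : ∀ (F : AddCircle (1:ℝ) → ℂ) (hm : MemLp F 2 haarAddCircle) (n : ℤ),
      fourierCoeff ((hm.toLp F : Lp ℂ 2 (@haarAddCircle 1 _)) : AddCircle (1:ℝ) → ℂ) n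
        = fourierCoeff F n := by
    intro F hm n
    simp only [fourierCoeff]
    apply integral_congr_ae
    filter_upwards [hm.coeFn_toLp] with t ht
    rw [ht]
  have hcoefa : ∀ n : ℤ, fourierCoeff (x : AddCircle (1:ℝ) → ℂ) n = ((S (a - n) : ℝ) : ℂ) := by
    intro n
    rw [hcoe _ hma n]
    show fourierCoeff (AddCircle.liftIoc 1 _ _) n = _
    rw [fourierCoeff_liftIoc_eq]
    exact key a n _
  have hcoefb : ∀ n : ℤ, fourierCoeff (y : AddCircle (1:ℝ) → ℂ) n = ((S (b - n) : ℝ) : ℂ) := by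
    intro n
    rw [hcoe _ hmb n]
    show fourierCoeff (AddCircle.liftIoc 1 _ _) n = _
    rw [fourierCoeff_liftIoc_eq]
    exact key b n _
  have hinner : (inner ℂ x y : ℂ) = ((S (a - b) : ℝ) : ℂ) := by
    rw [MeasureTheory.L2.inner_def]
    simp_rw [RCLike.inner_apply]
    have : ∫ t, (starRingEnd ℂ) ((x : AddCircle (1:ℝ) → ℂ) t) * (y : AddCircle (1:ℝ) → ℂ) t
          ∂haarAddCircle
        = ∫ t, (AddCircle.liftIoc (1:ℝ) (-(1:ℝ)/2)
            (fun t : ℝ => Complex.exp (2 * π * Complex.I * (b - a) * t))) t ∂haarAddCircle := by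
      apply integral_congr_ae
      filter_upwards [hma.coeFn_toLp, hmb.coeFn_toLp] with t h1 h2
      rw [h1, h2]
      show (starRingEnd ℂ) (Complex.exp (2 * π * Complex.I * a * ((equivIoc 1 (-(1:ℝ)/2) t : ℝ) : ℂ)))
          * Complex.exp (2 * π * Complex.I * b * ((equivIoc 1 (-(1:ℝ)/2) t : ℝ) : ℂ))
        = Complex.exp (2 * π * Complex.I * ((b : ℂ) - (a : ℂ)) * ((equivIoc 1 (-(1:ℝ)/2) t : ℝ) : ℂ))
      rw [← Complex.exp_conj, ← Complex.exp_add]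
      congr 1
      simp only [map_mul, Complex.conj_I, Complex.conj_ofReal, map_ofNat]
      ring
    simp_rw [mul_comm ((y : AddCircle (1:ℝ) → ℂ) _) _]
    rw [this]
    have h0 : ∫ t, (AddCircle.liftIoc (1:ℝ) (-(1:ℝ)/2)
            (fun t : ℝ => Complex.exp (2 * π * Complex.I * (b - a) * t))) t ∂haarAddCircle
        = fourierCoeff (AddCircle.liftIoc (1:ℝ) (-(1:ℝ)/2)
            (fun t : ℝ => Complex.exp (2 * π * Complex.I * (b - a) * t))) 0 := by
      simp [fourierCoeff]
    rw [h0, fourierCoeff_liftIoc_eq]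
    have hkey := key (b - a) 0 (by norm_num)
    push_cast at hkey
    rw [hkey, show b - a - 0 = -(a - b) by ring, hSeven]
  have H := fourierBasis.hasSum_inner_mul_inner x y
  have hxk : ∀ k : ℤ, (inner ℂ x (fourierBasis k) : ℂ) = ((S (a - k) : ℝ) : ℂ) := by
    intro k
    rw [← inner_conj_symm, ← fourierBasis.repr_apply_apply, fourierBasis_repr, hcoefa k,
      Complex.conj_ofReal]
  have hky : ∀ k : ℤ, (inner ℂ (fourierBasis k) y : ℂ) = ((S (b - k) : ℝ) : ℂ) := by
    intro k
    rw [← fourierBasis.repr_apply_apply, fourierBasis_repr, hcoefb k]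
  simp_rw [hxk, hky, hinner] at H
  have H2 : HasSum (fun k : ℤ => S (a - k) * S (b - k)) (S (a - b)) := by
    rw [← Complex.hasSum_ofReal]
    convert H using 2 with k
    · rfl
    · push_cast
      ring
  exact ⟨H2.summable, H2.tsum_eq⟩
end

section
/- Let c ∈ ℂ, P > 0, E_s > 0, and set Δ_opt = |c|²/(E_s·P); assume 0 < Δ_opt < 1. Then the supremum, over all γ > 0 and φ ∈ ℝ, of log(1 + γ) − γ + (1 + γ)·(Re(e^{iφ}·c))²/(E_s·P) equals −log(1 − Δ_opt) = log(1 + Δ_opt/(1 − Δ_opt)). (This is the core optimization yielding the GMI formula for complex-valued Nyquist-sampled channels, where c = E[conj(f(x,z))·x] and P = E[|f(x,z)|²].) -/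
open Real Complex

theorem stmt_18 (c : ℂ) (P Es : ℝ) (hP : 0 < P) (hEs : 0 < Es)
    (Δopt : ℝ) (hΔdef : Δopt = ‖c‖ ^ 2 / (Es * P))
    (hΔ0 : 0 < Δopt) (hΔ1 : Δopt < 1) :
    IsLUB {y : ℝ | ∃ γ φ : ℝ, 0 < γ ∧
        y = Real.log (1 + γ) - γ
          + (1 + γ) * ((Complex.exp (φ * Complex.I) * c).re) ^ 2 / (Es * P)}
      (-Real.log (1 - Δopt)) := by
  have hEP : 0 < Es * P := mul_pos hEs hP
  have h1Δ : 0 < 1 - Δopt := by linarith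
  constructor
  · rintro y ⟨γ, φ, hγ, rfl⟩
    have hre : ((Complex.exp (φ * Complex.I) * c).re) ^ 2 ≤ ‖c‖ ^ 2 := by
      have h1 : |(Complex.exp (φ * Complex.I) * c).re| ≤
          ‖Complex.exp (φ * Complex.I) * c‖ := Complex.abs_re_le_norm _
      have h2 : ‖Complex.exp ((φ:ℂ) * Complex.I) * c‖ = ‖c‖ := by
        rw [norm_mul, Complex.norm_exp_ofReal_mul_I, one_mul]
      rw [h2] at h1
      calc ((Complex.exp (φ * Complex.I) * c).re) ^ 2
          = |(Complex.exp (φ * Complex.I) * c).re| ^ 2 := (_root_.sq_abs _).symm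
        _ ≤ ‖c‖ ^ 2 := pow_le_pow_left₀ (abs_nonneg _) h1 2
    have ht : (1 + γ) * ((Complex.exp (φ * Complex.I) * c).re) ^ 2 / (Es * P)
        ≤ (1 + γ) * Δopt := by
      rw [hΔdef, mul_div_assoc]
      gcongr
    have hγ1 : (0:ℝ) < 1 + γ := by linarith
    have hu : 0 < (1 + γ) * (1 - Δopt) := mul_pos hγ1 h1Δ
    have hlogu : Real.log ((1 + γ) * (1 - Δopt)) ≤ (1 + γ) * (1 - Δopt) - 1 :=
      Real.log_le_sub_one_of_pos hu
    rw [Real.log_mul (ne_of_gt hγ1) (ne_of_gt h1Δ)] at hlogu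
    have : Real.log (1 + γ) - γ + (1 + γ) * Δopt ≤ -Real.log (1 - Δopt) := by nlinarith
    linarith
  · intro b hb
    apply hb
    refine ⟨Δopt / (1 - Δopt), -c.arg, div_pos hΔ0 h1Δ, ?_⟩
    have hc : Complex.exp (((-c.arg : ℝ) : ℂ) * Complex.I) * c = ((‖c‖ : ℝ) : ℂ) := by
      have h := Complex.norm_mul_exp_arg_mul_I c
      calc Complex.exp (((-c.arg : ℝ) : ℂ) * Complex.I) * c
          = Complex.exp (((-c.arg : ℝ) : ℂ) * Complex.I) *
            (((‖c‖ : ℝ) : ℂ) * Complex.exp (c.arg * Complex.I)) := by rw [h]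
        _ = ((‖c‖ : ℝ) : ℂ) *
            Complex.exp (((-c.arg : ℝ) : ℂ) * Complex.I + c.arg * Complex.I) := by
            rw [Complex.exp_add]; ring
        _ = ((‖c‖ : ℝ) : ℂ) := by
            have : ((-c.arg : ℝ) : ℂ) * Complex.I + c.arg * Complex.I = 0 := by
              push_cast; ring
            rw [this, Complex.exp_zero, mul_one]
    rw [hc]
    simp only [Complex.ofReal_re]
    have habs : ‖c‖ ^ 2 = Δopt * (Es * P) := by
      rw [hΔdef]; field_simp
    have hγ1 : 1 + Δopt / (1 - Δopt) = 1 / (1 - Δopt) := by field_simp; ring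
    rw [habs, hγ1]
    rw [Real.log_div one_ne_zero (ne_of_gt h1Δ), Real.log_one]
    field_simp
    ring
end

section
/- Let M ≥ 1 and let p⁺, p⁻ : {1, …, M} → (0, ∞) satisfy Σ_{i=1}^M (p_i⁺ + p_i⁻) = 1. Then Σ_{i=1}^M [ ((p_i⁺ − p_i⁻)/2)·log(p_i⁺/p_i⁻) + (p_i⁺ + p_i⁻)·log 2 − (p_i⁺ + p_i⁻)·log(√(p_i⁺/p_i⁻) + √(p_i⁻/p_i⁺)) ] = log 2 − Σ_{i=1}^M [ (p_i⁺ + p_i⁻)·log(p_i⁺ + p_i⁻) − p_i⁺·log p_i⁺ − p_i⁻·log p_i⁻ ]. (This identity shows that, for antipodal inputs and a symmetric output quantizer with transition probabilities p_i^{(±)} = Pr[w = ±r_i | x = √E_s], the GMI with optimized reconstruction points equals the channel input–output mutual information I(x; w).) -/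
open Real

theorem stmt_19 (M : ℕ) (hM : 1 ≤ M) (pp pm : ℕ → ℝ)
    (hpp : ∀ i ∈ Finset.Icc 1 M, 0 < pp i)
    (hpm : ∀ i ∈ Finset.Icc 1 M, 0 < pm i)
    (hsum : ∑ i ∈ Finset.Icc 1 M, (pp i + pm i) = 1) :
    ∑ i ∈ Finset.Icc 1 M,
        ((pp i - pm i) / 2 * Real.log (pp i / pm i)
          + (pp i + pm i) * Real.log 2
          - (pp i + pm i) * Real.log (Real.sqrt (pp i / pm i) + Real.sqrt (pm i / pp i)))
      = Real.log 2 - ∑ i ∈ Finset.Icc 1 M,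
          ((pp i + pm i) * Real.log (pp i + pm i)
            - pp i * Real.log (pp i) - pm i * Real.log (pm i)) := by
  have key : ∀ i ∈ Finset.Icc 1 M,
      ((pp i - pm i) / 2 * Real.log (pp i / pm i)
        + (pp i + pm i) * Real.log 2
        - (pp i + pm i) * Real.log (Real.sqrt (pp i / pm i) + Real.sqrt (pm i / pp i)))
      = (pp i + pm i) * Real.log 2
        - ((pp i + pm i) * Real.log (pp i + pm i)
            - pp i * Real.log (pp i) - pm i * Real.log (pm i)) := by
    intro i hi
    have ha := hpp i hi
    have hb := hpm i hi
    have hab : 0 < pp i * pm i := mul_pos ha hb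
    have hsa : (0:ℝ) < Real.sqrt (pp i) := Real.sqrt_pos.2 ha
    have hsb : (0:ℝ) < Real.sqrt (pm i) := Real.sqrt_pos.2 hb
    have hs : Real.sqrt (pp i / pm i) + Real.sqrt (pm i / pp i)
        = (pp i + pm i) / Real.sqrt (pp i * pm i) := by
      rw [Real.sqrt_div ha.le, Real.sqrt_div hb.le, Real.sqrt_mul ha.le]
      rw [div_add_div _ _ hsb.ne' hsa.ne']
      rw [Real.mul_self_sqrt ha.le, Real.mul_self_sqrt hb.le, mul_comm (Real.sqrt (pm i))]
    rw [Real.log_div ha.ne' hb.ne', hs,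
        Real.log_div (by positivity) (Real.sqrt_pos.2 hab).ne',
        Real.log_sqrt hab.le, Real.log_mul ha.ne' hb.ne']
    ring
  rw [Finset.sum_congr rfl key, Finset.sum_sub_distrib, ← Finset.sum_mul, hsum, one_mul]
end
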